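/- arXiv:1506.04255 — 6 statements merged into one kernel-verified Lean document; each statement's English description precedes it below -/
import Mathlib

section
/- Let S₀, S₁ ⊆ ℝⁿ be compact sets, let ρ₀ and ρ₁ be probability densities on S₀ and S₁ respectively, and let q : S₀ × S₁ → ℝ be continuous and strictly positive. Then there exist nonnegative measurable functions φ₀, φ̂₀ on S₀ and φ₁, φ̂₁ on S₁ satisfying the Schrödinger system: φ₀(x) = ∫_{S₁} q(x,y) φ₁(y) dy for all x ∈ S₀; φ̂₁(x) = ∫_{S₀} q(y,x) φ̂₀(y) dy for all x ∈ S₁; ρ₀(x) = φ₀(x) φ̂₀(x) for a.e. x ∈ S₀; and ρ₁(x) = φ₁(x) φ̂₁(x) for a.e. x ∈ S₁. -/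
open MeasureTheory Filter Topology

set_option linter.unusedSectionVars false

noncomputable section

namespace SchroedingerAux

variable {X Y : Type*} [MeasurableSpace X] [MeasurableSpace Y]

/-- The operator `B w (y) = ∫ K x y ρ₀ x / w x dμ`. -/
def Bop (μ : Measure X) (ρ₀ : X → ℝ) (K : X → Y → ℝ) (w : X → ℝ) : Y → ℝ :=
  fun y => ∫ x, K x y * (ρ₀ x / w x) ∂μ

def uop (μ : Measure X) (ρ₀ : X → ℝ) (ρ₁ : Y → ℝ) (K : X → Y → ℝ) (w : X → ℝ) : Y → ℝ :=
  fun y => ρ₁ y / Bop μ ρ₀ K w y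

def Top (μ : Measure X) (ν : Measure Y) (ρ₀ : X → ℝ) (ρ₁ : Y → ℝ) (K : X → Y → ℝ)
    (w : X → ℝ) : X → ℝ :=
  fun x => ∫ y, K x y * uop μ ρ₀ ρ₁ K w y ∂ν

/-- Full data of the Schrödinger problem. -/
structure Setup (μ : Measure X) (ν : Measure Y) (ρ₀ : X → ℝ) (ρ₁ : Y → ℝ)
    (K : X → Y → ℝ) (m M : ℝ) : Prop where
  hρ₀m : Measurable ρ₀
  hρ₁m : Measurable ρ₁
  hρ₀nn : ∀ x, 0 ≤ ρ₀ x
  hρ₁nn : ∀ y, 0 ≤ ρ₁ y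
  hρ₀i : ∫ x, ρ₀ x ∂μ = 1
  hρ₁i : ∫ y, ρ₁ y ∂ν = 1
  hK : Measurable (Function.uncurry K)
  hm : 0 < m
  hmM : m ≤ M
  hKb : ∀ x y, m ≤ K x y ∧ K x y ≤ M

namespace Setup

variable {μ : Measure X} {ν : Measure Y} [IsFiniteMeasure μ] [IsFiniteMeasure ν]
  {ρ₀ : X → ℝ} {ρ₁ : Y → ℝ} {K : X → Y → ℝ} {m M : ℝ}
  (hs : Setup μ ν ρ₀ ρ₁ K m M)

section basic
include hs

lemma hM : 0 < M := hs.hm.trans_le hs.hmM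

lemma hρ₀int : Integrable ρ₀ μ := by
  by_contra h
  have h1 := hs.hρ₀i
  rw [integral_undef h] at h1
  norm_num at h1

lemma hρ₁int : Integrable ρ₁ ν := by
  by_contra h
  have h1 := hs.hρ₁i
  rw [integral_undef h] at h1
  norm_num at h1

lemma hV : 0 < (μ Set.univ).toReal := by
  rcases eq_or_ne (μ Set.univ) 0 with h | h
  · exfalso
    have h0 : μ = 0 := by simpa [Measure.measure_univ_eq_zero] using h
    have h1 := hs.hρ₀i
    rw [h0, integral_zero_measure] at h1
    norm_num at h1
  · exact ENNReal.toReal_pos h (measure_ne_top μ _)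

lemma hVY : 0 < (ν Set.univ).toReal := by
  rcases eq_or_ne (ν Set.univ) 0 with h | h
  · exfalso
    have h0 : ν = 0 := by simpa [Measure.measure_univ_eq_zero] using h
    have h1 := hs.hρ₁i
    rw [h0, integral_zero_measure] at h1
    norm_num at h1
  · exact ENNReal.toReal_pos h (measure_ne_top ν _)

lemma hKmeas_left (x : X) : Measurable fun y => K x y :=
  hs.hK.comp measurable_prodMk_left

lemma hKmeas_right (y : Y) : Measurable fun x => K x y :=
  hs.hK.comp measurable_prodMk_right

end basic

end Setup

/-- lower admissibility constant -/
def cLo (μ : Measure X) (m M : ℝ) : ℝ := m / (M * (μ Set.univ).toReal)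

/-- upper admissibility constant -/
def cHi (μ : Measure X) (m M : ℝ) : ℝ := M / (m * (μ Set.univ).toReal)

/-- admissible function -/
def Adm (μ : Measure X) (m M : ℝ) (w : X → ℝ) : Prop :=
  Measurable w ∧ ∀ x, cLo μ m M ≤ w x ∧ w x ≤ cHi μ m M

namespace Setup

variable {μ : Measure X} {ν : Measure Y} [IsFiniteMeasure μ] [IsFiniteMeasure ν]
  {ρ₀ : X → ℝ} {ρ₁ : Y → ℝ} {K : X → Y → ℝ} {m M : ℝ}
  (hs : Setup μ ν ρ₀ ρ₁ K m M)

section bounds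
include hs

lemma cLo_pos : 0 < cLo μ m M := div_pos hs.hm (mul_pos hs.hM hs.hV)

lemma cHi_pos : 0 < cHi μ m M := div_pos hs.hM (mul_pos hs.hm hs.hV)

lemma wpos {w : X → ℝ} (hw : Adm μ m M w) (x : X) : 0 < w x :=
  lt_of_lt_of_le hs.cLo_pos (hw.2 x).1

lemma rho_div_le {w : X → ℝ} (hw : Adm μ m M w) (x : X) :
    ρ₀ x / w x ≤ (cLo μ m M)⁻¹ * ρ₀ x := by
  rw [inv_mul_eq_div]
  gcongr
  · exact hs.hρ₀nn x
  · exact hs.cLo_pos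
  · exact (hw.2 x).1

lemma rho_div_nonneg {w : X → ℝ} (hw : Adm μ m M w) (x : X) : 0 ≤ ρ₀ x / w x :=
  div_nonneg (hs.hρ₀nn x) (hs.wpos hw x).le

lemma rho_div_int {w : X → ℝ} (hw : Adm μ m M w) :
    Integrable (fun x => ρ₀ x / w x) μ := by
  refine Integrable.mono' (hs.hρ₀int.const_mul (cLo μ m M)⁻¹)
    ((hs.hρ₀m.div hw.1).aestronglyMeasurable) (Filter.Eventually.of_forall fun x => ?_)
  rw [Real.norm_eq_abs, abs_of_nonneg (hs.rho_div_nonneg hw x)]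
  exact hs.rho_div_le hw x

lemma J_lb {w : X → ℝ} (hw : Adm μ m M w) :
    (cHi μ m M)⁻¹ ≤ ∫ x, ρ₀ x / w x ∂μ := by
  have h1 : ∫ x, ρ₀ x / cHi μ m M ∂μ ≤ ∫ x, ρ₀ x / w x ∂μ := by
    refine integral_mono (hs.hρ₀int.div_const _) (hs.rho_div_int hw) fun x => ?_
    gcongr
    · exact hs.hρ₀nn x
    · exact hs.wpos hw x
    · exact (hw.2 x).2
  rw [integral_div, hs.hρ₀i] at h1
  simpa [one_div] using h1

lemma J_ub {w : X → ℝ} (hw : Adm μ m M w) :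
    ∫ x, ρ₀ x / w x ∂μ ≤ (cLo μ m M)⁻¹ := by
  have h1 : ∫ x, ρ₀ x / w x ∂μ ≤ ∫ x, ρ₀ x / cLo μ m M ∂μ := by
    refine integral_mono (hs.rho_div_int hw) (hs.hρ₀int.div_const _) fun x => ?_
    gcongr
    · exact hs.hρ₀nn x
    · exact hs.cLo_pos
    · exact (hw.2 x).1
  rw [integral_div, hs.hρ₀i] at h1
  simpa [one_div] using h1

lemma Bop_slice_int {w : X → ℝ} (hw : Adm μ m M w) (y : Y) :
    Integrable (fun x => K x y * (ρ₀ x / w x)) μ := by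
  refine Integrable.mono' ((hs.rho_div_int hw).const_mul M)
    ((hs.hKmeas_right y).mul (hs.hρ₀m.div hw.1)).aestronglyMeasurable
    (Filter.Eventually.of_forall fun x => ?_)
  have h0 : 0 ≤ K x y * (ρ₀ x / w x) :=
    mul_nonneg ((hs.hm.le.trans (hs.hKb x y).1)) (hs.rho_div_nonneg hw x)
  rw [Real.norm_eq_abs, abs_of_nonneg h0]
  exact mul_le_mul_of_nonneg_right (hs.hKb x y).2 (hs.rho_div_nonneg hw x)

lemma Bop_lb {w : X → ℝ} (hw : Adm μ m M w) (y : Y) :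
    m * ∫ x, ρ₀ x / w x ∂μ ≤ Bop μ ρ₀ K w y := by
  have h1 : ∫ x, m * (ρ₀ x / w x) ∂μ ≤ ∫ x, K x y * (ρ₀ x / w x) ∂μ :=
    integral_mono ((hs.rho_div_int hw).const_mul m) (hs.Bop_slice_int hw y) fun x =>
      mul_le_mul_of_nonneg_right (hs.hKb x y).1 (hs.rho_div_nonneg hw x)
  rwa [integral_const_mul] at h1

lemma Bop_ub {w : X → ℝ} (hw : Adm μ m M w) (y : Y) :
    Bop μ ρ₀ K w y ≤ M * ∫ x, ρ₀ x / w x ∂μ := by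
  have h1 : ∫ x, K x y * (ρ₀ x / w x) ∂μ ≤ ∫ x, M * (ρ₀ x / w x) ∂μ :=
    integral_mono (hs.Bop_slice_int hw y) ((hs.rho_div_int hw).const_mul M) fun x =>
      mul_le_mul_of_nonneg_right (hs.hKb x y).2 (hs.rho_div_nonneg hw x)
  rwa [integral_const_mul] at h1

lemma Bop_pos_lb {w : X → ℝ} (hw : Adm μ m M w) (y : Y) :
    m * (cHi μ m M)⁻¹ ≤ Bop μ ρ₀ K w y :=
  le_trans (mul_le_mul_of_nonneg_left (hs.J_lb hw) hs.hm.le) (hs.Bop_lb hw y)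

lemma Bop_pos {w : X → ℝ} (hw : Adm μ m M w) (y : Y) : 0 < Bop μ ρ₀ K w y :=
  lt_of_lt_of_le (mul_pos hs.hm (inv_pos.mpr hs.cHi_pos)) (hs.Bop_pos_lb hw y)

lemma Bop_glob_ub {w : X → ℝ} (hw : Adm μ m M w) (y : Y) :
    Bop μ ρ₀ K w y ≤ M * (cLo μ m M)⁻¹ :=
  le_trans (hs.Bop_ub hw y) (mul_le_mul_of_nonneg_left (hs.J_ub hw) hs.hM.le)

lemma Bop_meas {w : X → ℝ} (hw : Adm μ m M w) : Measurable (Bop μ ρ₀ K w) := by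
  have h : StronglyMeasurable (Function.uncurry fun x y => K x y * (ρ₀ x / w x)) := by
    apply Measurable.stronglyMeasurable
    exact hs.hK.mul ((hs.hρ₀m.comp measurable_fst).div (hw.1.comp measurable_fst))
  exact h.integral_prod_left.measurable

lemma uop_nonneg {w : X → ℝ} (hw : Adm μ m M w) (y : Y) : 0 ≤ uop μ ρ₀ ρ₁ K w y :=
  div_nonneg (hs.hρ₁nn y) (hs.Bop_pos hw y).le

lemma uop_meas {w : X → ℝ} (hw : Adm μ m M w) : Measurable (uop μ ρ₀ ρ₁ K w) :=
  hs.hρ₁m.div (hs.Bop_meas hw)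

lemma uop_ub {w : X → ℝ} (hw : Adm μ m M w) (y : Y) :
    uop μ ρ₀ ρ₁ K w y ≤ (m * (cHi μ m M)⁻¹)⁻¹ * ρ₁ y := by
  rw [inv_mul_eq_div]
  show ρ₁ y / Bop μ ρ₀ K w y ≤ ρ₁ y / (m * (cHi μ m M)⁻¹)
  gcongr
  · exact hs.hρ₁nn y
  · exact mul_pos hs.hm (inv_pos.mpr hs.cHi_pos)
  · exact hs.Bop_pos_lb hw y

lemma uop_lb {w : X → ℝ} (hw : Adm μ m M w) (y : Y) :
    (M * (cLo μ m M)⁻¹)⁻¹ * ρ₁ y ≤ uop μ ρ₀ ρ₁ K w y := by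
  rw [inv_mul_eq_div]
  show ρ₁ y / (M * (cLo μ m M)⁻¹) ≤ ρ₁ y / Bop μ ρ₀ K w y
  gcongr
  · exact hs.hρ₁nn y
  · exact hs.Bop_pos hw y
  · exact hs.Bop_glob_ub hw y

lemma uop_int {w : X → ℝ} (hw : Adm μ m M w) : Integrable (uop μ ρ₀ ρ₁ K w) ν := by
  refine Integrable.mono' (hs.hρ₁int.const_mul (m * (cHi μ m M)⁻¹)⁻¹)
    (hs.uop_meas hw).aestronglyMeasurable (Filter.Eventually.of_forall fun y => ?_)
  rw [Real.norm_eq_abs, abs_of_nonneg (hs.uop_nonneg hw y)]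
  exact hs.uop_ub hw y

lemma Nop_lb {w : X → ℝ} (hw : Adm μ m M w) :
    (M * (cLo μ m M)⁻¹)⁻¹ ≤ ∫ y, uop μ ρ₀ ρ₁ K w y ∂ν := by
  have h1 : ∫ y, (M * (cLo μ m M)⁻¹)⁻¹ * ρ₁ y ∂ν ≤ ∫ y, uop μ ρ₀ ρ₁ K w y ∂ν :=
    integral_mono (hs.hρ₁int.const_mul _) (hs.uop_int hw) (hs.uop_lb hw)
  rwa [integral_const_mul, hs.hρ₁i, mul_one] at h1

lemma Nop_ub {w : X → ℝ} (hw : Adm μ m M w) :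
    ∫ y, uop μ ρ₀ ρ₁ K w y ∂ν ≤ (m * (cHi μ m M)⁻¹)⁻¹ := by
  have h1 : ∫ y, uop μ ρ₀ ρ₁ K w y ∂ν ≤ ∫ y, (m * (cHi μ m M)⁻¹)⁻¹ * ρ₁ y ∂ν :=
    integral_mono (hs.uop_int hw) (hs.hρ₁int.const_mul _) (hs.uop_ub hw)
  rwa [integral_const_mul, hs.hρ₁i, mul_one] at h1

lemma Nop_pos {w : X → ℝ} (hw : Adm μ m M w) : 0 < ∫ y, uop μ ρ₀ ρ₁ K w y ∂ν :=
  lt_of_lt_of_le (inv_pos.mpr (mul_pos hs.hM (inv_pos.mpr hs.cLo_pos))) (hs.Nop_lb hw)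

lemma Top_slice_int {w : X → ℝ} (hw : Adm μ m M w) (x : X) :
    Integrable (fun y => K x y * uop μ ρ₀ ρ₁ K w y) ν := by
  refine Integrable.mono' ((hs.uop_int hw).const_mul M)
    ((hs.hKmeas_left x).mul (hs.uop_meas hw)).aestronglyMeasurable
    (Filter.Eventually.of_forall fun y => ?_)
  have h0 : 0 ≤ K x y * uop μ ρ₀ ρ₁ K w y :=
    mul_nonneg (hs.hm.le.trans (hs.hKb x y).1) (hs.uop_nonneg hw y)
  rw [Real.norm_eq_abs, abs_of_nonneg h0]
  exact mul_le_mul_of_nonneg_right (hs.hKb x y).2 (hs.uop_nonneg hw y)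

lemma Top_lb {w : X → ℝ} (hw : Adm μ m M w) (x : X) :
    m * ∫ y, uop μ ρ₀ ρ₁ K w y ∂ν ≤ Top μ ν ρ₀ ρ₁ K w x := by
  have h1 : ∫ y, m * uop μ ρ₀ ρ₁ K w y ∂ν ≤ ∫ y, K x y * uop μ ρ₀ ρ₁ K w y ∂ν :=
    integral_mono ((hs.uop_int hw).const_mul m) (hs.Top_slice_int hw x) fun y =>
      mul_le_mul_of_nonneg_right (hs.hKb x y).1 (hs.uop_nonneg hw y)
  rwa [integral_const_mul] at h1

lemma Top_ub {w : X → ℝ} (hw : Adm μ m M w) (x : X) :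
    Top μ ν ρ₀ ρ₁ K w x ≤ M * ∫ y, uop μ ρ₀ ρ₁ K w y ∂ν := by
  have h1 : ∫ y, K x y * uop μ ρ₀ ρ₁ K w y ∂ν ≤ ∫ y, M * uop μ ρ₀ ρ₁ K w y ∂ν :=
    integral_mono (hs.Top_slice_int hw x) ((hs.uop_int hw).const_mul M) fun y =>
      mul_le_mul_of_nonneg_right (hs.hKb x y).2 (hs.uop_nonneg hw y)
  rwa [integral_const_mul] at h1

lemma Top_pos {w : X → ℝ} (hw : Adm μ m M w) (x : X) : 0 < Top μ ν ρ₀ ρ₁ K w x :=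
  lt_of_lt_of_le (mul_pos hs.hm (hs.Nop_pos hw)) (hs.Top_lb hw x)

lemma Top_meas {w : X → ℝ} (hw : Adm μ m M w) : Measurable (Top μ ν ρ₀ ρ₁ K w) := by
  have h : StronglyMeasurable (Function.uncurry fun x y => K x y * uop μ ρ₀ ρ₁ K w y) := by
    apply Measurable.stronglyMeasurable
    exact hs.hK.mul ((hs.uop_meas hw).comp measurable_snd)
  exact h.integral_prod_right.measurable

lemma Top_int {w : X → ℝ} (hw : Adm μ m M w) : Integrable (Top μ ν ρ₀ ρ₁ K w) μ := by
  refine Integrable.mono' (integrable_const (M * (m * (cHi μ m M)⁻¹)⁻¹))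
    (hs.Top_meas hw).aestronglyMeasurable (Filter.Eventually.of_forall fun x => ?_)
  rw [Real.norm_eq_abs, abs_of_nonneg (hs.Top_pos hw x).le]
  exact le_trans (hs.Top_ub hw x)
    (mul_le_mul_of_nonneg_left (hs.Nop_ub hw) hs.hM.le)

lemma Zop_lb {w : X → ℝ} (hw : Adm μ m M w) :
    m * (∫ y, uop μ ρ₀ ρ₁ K w y ∂ν) * (μ Set.univ).toReal ≤ ∫ x, Top μ ν ρ₀ ρ₁ K w x ∂μ := by
  have h1 : ∫ _x : X, m * ∫ y, uop μ ρ₀ ρ₁ K w y ∂ν ∂μ ≤ ∫ x, Top μ ν ρ₀ ρ₁ K w x ∂μ :=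
    integral_mono (integrable_const _) (hs.Top_int hw) (hs.Top_lb hw)
  rwa [integral_const, smul_eq_mul, mul_comm] at h1

lemma Zop_ub {w : X → ℝ} (hw : Adm μ m M w) :
    ∫ x, Top μ ν ρ₀ ρ₁ K w x ∂μ ≤ M * (∫ y, uop μ ρ₀ ρ₁ K w y ∂ν) * (μ Set.univ).toReal := by
  have h1 : ∫ x, Top μ ν ρ₀ ρ₁ K w x ∂μ ≤ ∫ _x : X, M * ∫ y, uop μ ρ₀ ρ₁ K w y ∂ν ∂μ :=
    integral_mono (hs.Top_int hw) (integrable_const _) (hs.Top_ub hw)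
  rwa [integral_const, smul_eq_mul, mul_comm] at h1

lemma Zop_pos {w : X → ℝ} (hw : Adm μ m M w) : 0 < ∫ x, Top μ ν ρ₀ ρ₁ K w x ∂μ :=
  lt_of_lt_of_le (mul_pos (mul_pos hs.hm (hs.Nop_pos hw)) hs.hV) (hs.Zop_lb hw)

end bounds

end Setup

/-- normalized iteration map -/
def Ttil (μ : Measure X) (ν : Measure Y) (ρ₀ : X → ℝ) (ρ₁ : Y → ℝ) (K : X → Y → ℝ)
    (w : X → ℝ) : X → ℝ :=
  fun x => Top μ ν ρ₀ ρ₁ K w x / ∫ x, Top μ ν ρ₀ ρ₁ K w x ∂μ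

namespace Setup

variable {μ : Measure X} {ν : Measure Y} [IsFiniteMeasure μ] [IsFiniteMeasure ν]
  {ρ₀ : X → ℝ} {ρ₁ : Y → ℝ} {K : X → Y → ℝ} {m M : ℝ}
  (hs : Setup μ ν ρ₀ ρ₁ K m M)

section step
include hs

lemma Ttil_adm {w : X → ℝ} (hw : Adm μ m M w) : Adm μ m M (Ttil μ ν ρ₀ ρ₁ K w) := by
  set N := ∫ y, uop μ ρ₀ ρ₁ K w y ∂ν with hN
  set Z := ∫ x, Top μ ν ρ₀ ρ₁ K w x ∂μ with hZ
  have hNpos : 0 < N := hs.Nop_pos hw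
  have hZpos : 0 < Z := hs.Zop_pos hw
  have hVpos : 0 < (μ Set.univ).toReal := hs.hV
  have hmpos : 0 < m := hs.hm
  have hMpos : 0 < M := hs.hM
  refine ⟨(hs.Top_meas hw).div_const _, fun x => ⟨?_, ?_⟩⟩
  · have h1 : cLo μ m M = m * N / (M * N * (μ Set.univ).toReal) := by
      rw [cLo, div_eq_div_iff (by positivity) (by positivity)]
      ring
    rw [h1]
    exact div_le_div₀ (hs.Top_pos hw x).le (hs.Top_lb hw x) hZpos (hs.Zop_ub hw)
  · have h1 : cHi μ m M = M * N / (m * N * (μ Set.univ).toReal) := by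
      rw [cHi, div_eq_div_iff (by positivity) (by positivity)]
      ring
    rw [h1]
    exact div_le_div₀ (mul_nonneg hs.hM.le hNpos.le) (hs.Top_ub hw x)
      (mul_pos (mul_pos hs.hm hNpos) hVpos) (hs.Zop_lb hw)

lemma Ttil_integral_one {w : X → ℝ} (hw : Adm μ m M w) :
    ∫ x, Ttil μ ν ρ₀ ρ₁ K w x ∂μ = 1 := by
  simp only [Ttil]
  rw [integral_div]
  exact div_self (hs.Zop_pos hw).ne'

lemma hXne : Nonempty X := by
  by_contra h
  have h0 : μ Set.univ = 0 := by
    have he : (Set.univ : Set X) = ∅ := Set.univ_eq_empty_iff.mpr (not_nonempty_iff.mp h)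
    rw [he]; exact measure_empty
  have hv := hs.hV
  rw [h0] at hv
  simp at hv

lemma contraction {w w' : X → ℝ} (hw : Adm μ m M w) (hw' : Adm μ m M w')
    {a b : ℝ} (ha : 0 < a)
    (hR : ∀ x, a * w' x ≤ w x ∧ w x ≤ b * w' x) :
    ∃ a' b' : ℝ, 0 < a' ∧
      (∀ x, a' * Ttil μ ν ρ₀ ρ₁ K w' x ≤ Ttil μ ν ρ₀ ρ₁ K w x ∧
        Ttil μ ν ρ₀ ρ₁ K w x ≤ b' * Ttil μ ν ρ₀ ρ₁ K w' x) ∧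
      b' / a' - 1 ≤ (1 - m / M) * (b / a - 1) := by
  obtain ⟨x₀⟩ := hs.hXne
  have hab : a ≤ b := by
    have h1 : a * w' x₀ ≤ b * w' x₀ := (hR x₀).1.trans (hR x₀).2
    exact (mul_le_mul_iff_of_pos_right (hs.wpos hw' x₀)).mp h1
  have hb : 0 < b := ha.trans_le hab
  -- comparison of the B-potentials
  have hBub : ∀ y, Bop μ ρ₀ K w y ≤ a⁻¹ * Bop μ ρ₀ K w' y := by
    intro y
    have h1 : ∫ x, K x y * (ρ₀ x / w x) ∂μ ≤ ∫ x, a⁻¹ * (K x y * (ρ₀ x / w' x)) ∂μ := by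
      refine integral_mono (hs.Bop_slice_int hw y) ((hs.Bop_slice_int hw' y).const_mul _)
        fun x => ?_
      have hptw : ρ₀ x / w x ≤ ρ₀ x / (a * w' x) := by
        gcongr
        · exact hs.hρ₀nn x
        · exact mul_pos ha (hs.wpos hw' x)
        · exact (hR x).1
      have e : ρ₀ x / (a * w' x) = a⁻¹ * (ρ₀ x / w' x) := by
        field_simp
      calc K x y * (ρ₀ x / w x) ≤ K x y * (a⁻¹ * (ρ₀ x / w' x)) := by
            refine mul_le_mul_of_nonneg_left ?_ (hs.hm.le.trans (hs.hKb x y).1)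
            rw [← e]; exact hptw
        _ = a⁻¹ * (K x y * (ρ₀ x / w' x)) := by ring
    rwa [integral_const_mul] at h1
  have hBlb : ∀ y, b⁻¹ * Bop μ ρ₀ K w' y ≤ Bop μ ρ₀ K w y := by
    intro y
    have h1 : ∫ x, b⁻¹ * (K x y * (ρ₀ x / w' x)) ∂μ ≤ ∫ x, K x y * (ρ₀ x / w x) ∂μ := by
      refine integral_mono ((hs.Bop_slice_int hw' y).const_mul _) (hs.Bop_slice_int hw y)
        fun x => ?_
      have hptw : ρ₀ x / (b * w' x) ≤ ρ₀ x / w x := by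
        gcongr
        · exact hs.hρ₀nn x
        · exact hs.wpos hw x
        · exact (hR x).2
      have e : ρ₀ x / (b * w' x) = b⁻¹ * (ρ₀ x / w' x) := by
        field_simp
      calc b⁻¹ * (K x y * (ρ₀ x / w' x)) = K x y * (b⁻¹ * (ρ₀ x / w' x)) := by ring
        _ ≤ K x y * (ρ₀ x / w x) := by
            refine mul_le_mul_of_nonneg_left ?_ (hs.hm.le.trans (hs.hKb x y).1)
            rw [← e]; exact hptw
    rwa [integral_const_mul] at h1
  -- comparison of the densities u
  have hu1 : ∀ y, a * uop μ ρ₀ ρ₁ K w' y ≤ uop μ ρ₀ ρ₁ K w y := by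
    intro y
    have e : a * (ρ₁ y / Bop μ ρ₀ K w' y) = ρ₁ y / (a⁻¹ * Bop μ ρ₀ K w' y) := by
      field_simp [ha.ne', (hs.Bop_pos hw' y).ne']
    show a * (ρ₁ y / Bop μ ρ₀ K w' y) ≤ ρ₁ y / Bop μ ρ₀ K w y
    rw [e]
    gcongr
    · exact hs.hρ₁nn y
    · exact hs.Bop_pos hw y
    · exact hBub y
  have hu2 : ∀ y, uop μ ρ₀ ρ₁ K w y ≤ b * uop μ ρ₀ ρ₁ K w' y := by
    intro y
    have e : b * (ρ₁ y / Bop μ ρ₀ K w' y) = ρ₁ y / (b⁻¹ * Bop μ ρ₀ K w' y) := by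
      field_simp [hb.ne', (hs.Bop_pos hw' y).ne']
    show ρ₁ y / Bop μ ρ₀ K w y ≤ b * (ρ₁ y / Bop μ ρ₀ K w' y)
    rw [e]
    gcongr
    · exact hs.hρ₁nn y
    · exact mul_pos (inv_pos.mpr hb) (hs.Bop_pos hw' y)
    · exact hBlb y
  -- integrals
  set N' := ∫ y, uop μ ρ₀ ρ₁ K w' y ∂ν with hN'def
  set Nw := ∫ y, uop μ ρ₀ ρ₁ K w y ∂ν with hNwdef
  have hN' : 0 < N' := hs.Nop_pos hw'
  have hmpos := hs.hm
  have hMpos := hs.hM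
  have hmM := hs.hmM
  set G := Nw - a * N' with hGdef
  set H := b * N' - Nw with hHdef
  have hG : 0 ≤ G := by
    have h1 : ∫ y, a * uop μ ρ₀ ρ₁ K w' y ∂ν ≤ ∫ y, uop μ ρ₀ ρ₁ K w y ∂ν :=
      integral_mono ((hs.uop_int hw').const_mul a) (hs.uop_int hw) hu1
    rw [integral_const_mul] at h1
    simp only [hGdef, sub_nonneg]
    exact h1
  have hH : 0 ≤ H := by
    have h1 : ∫ y, uop μ ρ₀ ρ₁ K w y ∂ν ≤ ∫ y, b * uop μ ρ₀ ρ₁ K w' y ∂ν :=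
      integral_mono (hs.uop_int hw) ((hs.uop_int hw').const_mul b) hu2
    rw [integral_const_mul] at h1
    simp only [hHdef, sub_nonneg]
    exact h1
  -- pointwise bounds on Top
  have cA : ∀ x, m * G ≤ Top μ ν ρ₀ ρ₁ K w x - a * Top μ ν ρ₀ ρ₁ K w' x := by
    intro x
    have eint : (fun y => K x y * (uop μ ρ₀ ρ₁ K w y - a * uop μ ρ₀ ρ₁ K w' y))
        = fun y => K x y * uop μ ρ₀ ρ₁ K w y - a * (K x y * uop μ ρ₀ ρ₁ K w' y) := by
      funext y; ring
    have hint : Integrable (fun y => K x y * (uop μ ρ₀ ρ₁ K w y - a * uop μ ρ₀ ρ₁ K w' y)) ν := by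
      rw [eint]
      exact (hs.Top_slice_int hw x).sub ((hs.Top_slice_int hw' x).const_mul a)
    have h1 : ∫ y, m * (uop μ ρ₀ ρ₁ K w y - a * uop μ ρ₀ ρ₁ K w' y) ∂ν
        ≤ ∫ y, K x y * (uop μ ρ₀ ρ₁ K w y - a * uop μ ρ₀ ρ₁ K w' y) ∂ν := by
      refine integral_mono (((hs.uop_int hw).sub ((hs.uop_int hw').const_mul a)).const_mul m)
        hint fun y => ?_
      exact mul_le_mul_of_nonneg_right (hs.hKb x y).1 (sub_nonneg.mpr (hu1 y))
    have hL : ∫ y, m * (uop μ ρ₀ ρ₁ K w y - a * uop μ ρ₀ ρ₁ K w' y) ∂ν = m * G := by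
      rw [integral_const_mul, integral_sub (hs.uop_int hw) ((hs.uop_int hw').const_mul a),
        integral_const_mul]
    have hRr : ∫ y, K x y * (uop μ ρ₀ ρ₁ K w y - a * uop μ ρ₀ ρ₁ K w' y) ∂ν
        = Top μ ν ρ₀ ρ₁ K w x - a * Top μ ν ρ₀ ρ₁ K w' x := by
      rw [eint, integral_sub (hs.Top_slice_int hw x) ((hs.Top_slice_int hw' x).const_mul a),
        integral_const_mul]
      rfl
    rw [hL, hRr] at h1
    exact h1
  have cB : ∀ x, m * H ≤ b * Top μ ν ρ₀ ρ₁ K w' x - Top μ ν ρ₀ ρ₁ K w x := by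
    intro x
    have eint : (fun y => K x y * (b * uop μ ρ₀ ρ₁ K w' y - uop μ ρ₀ ρ₁ K w y))
        = fun y => b * (K x y * uop μ ρ₀ ρ₁ K w' y) - K x y * uop μ ρ₀ ρ₁ K w y := by
      funext y; ring
    have hint : Integrable (fun y => K x y * (b * uop μ ρ₀ ρ₁ K w' y - uop μ ρ₀ ρ₁ K w y)) ν := by
      rw [eint]
      exact ((hs.Top_slice_int hw' x).const_mul b).sub (hs.Top_slice_int hw x)
    have h1 : ∫ y, m * (b * uop μ ρ₀ ρ₁ K w' y - uop μ ρ₀ ρ₁ K w y) ∂ν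
        ≤ ∫ y, K x y * (b * uop μ ρ₀ ρ₁ K w' y - uop μ ρ₀ ρ₁ K w y) ∂ν := by
      refine integral_mono ((((hs.uop_int hw').const_mul b).sub (hs.uop_int hw)).const_mul m)
        hint fun y => ?_
      exact mul_le_mul_of_nonneg_right (hs.hKb x y).1 (sub_nonneg.mpr (hu2 y))
    have hL : ∫ y, m * (b * uop μ ρ₀ ρ₁ K w' y - uop μ ρ₀ ρ₁ K w y) ∂ν = m * H := by
      rw [integral_const_mul, integral_sub ((hs.uop_int hw').const_mul b) (hs.uop_int hw),
        integral_const_mul]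
    have hRr : ∫ y, K x y * (b * uop μ ρ₀ ρ₁ K w' y - uop μ ρ₀ ρ₁ K w y) ∂ν
        = b * Top μ ν ρ₀ ρ₁ K w' x - Top μ ν ρ₀ ρ₁ K w x := by
      rw [eint, integral_sub ((hs.Top_slice_int hw' x).const_mul b) (hs.Top_slice_int hw x),
        integral_const_mul]
      rfl
    rw [hL, hRr] at h1
    exact h1
  -- the improved ratio bounds for Top
  have hMN' : 0 < M * N' := mul_pos hMpos hN'
  set a1 := a + m * G / (M * N') with ha1def
  set b1 := b - m * H / (M * N') with hb1def
  have hfracG : 0 ≤ m * G / (M * N') := div_nonneg (mul_nonneg hmpos.le hG) hMN'.le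
  have hfracH : 0 ≤ m * H / (M * N') := div_nonneg (mul_nonneg hmpos.le hH) hMN'.le
  have ha1 : 0 < a1 := lt_of_lt_of_le ha (by simp only [ha1def, le_add_iff_nonneg_right]; exact hfracG)
  have hTlow : ∀ x, a1 * Top μ ν ρ₀ ρ₁ K w' x ≤ Top μ ν ρ₀ ρ₁ K w x := by
    intro x
    have c3 : Top μ ν ρ₀ ρ₁ K w' x ≤ M * N' := hs.Top_ub hw' x
    calc a1 * Top μ ν ρ₀ ρ₁ K w' x
        = a * Top μ ν ρ₀ ρ₁ K w' x + m * G / (M * N') * Top μ ν ρ₀ ρ₁ K w' x := by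
          rw [ha1def]; ring
      _ ≤ a * Top μ ν ρ₀ ρ₁ K w' x + m * G / (M * N') * (M * N') := by
          gcongr
      _ = a * Top μ ν ρ₀ ρ₁ K w' x + m * G := by
          rw [div_mul_cancel₀ _ hMN'.ne']
      _ ≤ Top μ ν ρ₀ ρ₁ K w x := by
          have := cA x; linarith
  have hThigh : ∀ x, Top μ ν ρ₀ ρ₁ K w x ≤ b1 * Top μ ν ρ₀ ρ₁ K w' x := by
    intro x
    have c3 : Top μ ν ρ₀ ρ₁ K w' x ≤ M * N' := hs.Top_ub hw' x
    have h1 : m * H / (M * N') * Top μ ν ρ₀ ρ₁ K w' x ≤ m * H / (M * N') * (M * N') :=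
      mul_le_mul_of_nonneg_left c3 hfracH
    rw [div_mul_cancel₀ _ hMN'.ne'] at h1
    have h2 := cB x
    have e : b1 * Top μ ν ρ₀ ρ₁ K w' x
        = b * Top μ ν ρ₀ ρ₁ K w' x - m * H / (M * N') * Top μ ν ρ₀ ρ₁ K w' x := by
      rw [hb1def]; ring
    rw [e]; nlinarith [h1, h2]
  -- pass to the normalized map
  set Z := ∫ x, Top μ ν ρ₀ ρ₁ K w x ∂μ with hZdef
  set Z' := ∫ x, Top μ ν ρ₀ ρ₁ K w' x ∂μ with hZ'def
  have hZ : 0 < Z := hs.Zop_pos hw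
  have hZ' : 0 < Z' := hs.Zop_pos hw'
  refine ⟨a1 * (Z' / Z), b1 * (Z' / Z), mul_pos ha1 (div_pos hZ' hZ), fun x => ⟨?_, ?_⟩, ?_⟩
  · show a1 * (Z' / Z) * (Top μ ν ρ₀ ρ₁ K w' x / Z') ≤ Top μ ν ρ₀ ρ₁ K w x / Z
    have e : a1 * (Z' / Z) * (Top μ ν ρ₀ ρ₁ K w' x / Z') = a1 * Top μ ν ρ₀ ρ₁ K w' x / Z := by
      field_simp
    rw [e]
    gcongr
    exact hTlow x
  · show Top μ ν ρ₀ ρ₁ K w x / Z ≤ b1 * (Z' / Z) * (Top μ ν ρ₀ ρ₁ K w' x / Z')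
    have e : b1 * (Z' / Z) * (Top μ ν ρ₀ ρ₁ K w' x / Z') = b1 * Top μ ν ρ₀ ρ₁ K w' x / Z := by
      field_simp
    rw [e]
    gcongr
    exact hThigh x
  · have e1 : b1 * (Z' / Z) / (a1 * (Z' / Z)) = b1 / a1 :=
      mul_div_mul_right _ _ (div_pos hZ' hZ).ne'
    rw [e1]
    have key : b1 - a1 = (1 - m / M) * (b - a) := by
      rw [hb1def, ha1def, hGdef, hHdef]
      field_simp [hMpos.ne', hN'.ne']
      ring
    have hba1 : 0 ≤ b1 - a1 := by
      rw [key]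
      have h1 : 0 ≤ 1 - m / M := by
        rw [sub_nonneg, div_le_one hMpos]
        exact hmM
      exact mul_nonneg h1 (sub_nonneg.mpr hab)
    have haa1 : a ≤ a1 := by
      simp only [ha1def, le_add_iff_nonneg_right]
      exact hfracG
    have e2 : b1 / a1 - 1 = (b1 - a1) / a1 := by
      field_simp
    have e3 : (b1 - a1) / a = (1 - m / M) * (b / a - 1) := by
      rw [key, mul_div_assoc, sub_div, div_self ha.ne']
    calc b1 / a1 - 1 = (b1 - a1) / a1 := e2
      _ ≤ (b1 - a1) / a := div_le_div_of_nonneg_left hba1 ha haa1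
      _ = (1 - m / M) * (b / a - 1) := e3
lemma Adm_int {w : X → ℝ} (hw : Adm μ m M w) : Integrable w μ := by
  refine Integrable.mono' (integrable_const (cHi μ m M)) hw.1.aestronglyMeasurable
    (Filter.Eventually.of_forall fun x => ?_)
  rw [Real.norm_eq_abs, abs_of_nonneg (hs.wpos hw x).le]
  exact (hw.2 x).2

lemma ratio_dist {w w' : X → ℝ} (hw : Adm μ m M w) (hw' : Adm μ m M w')
    (hwi : ∫ x, w x ∂μ = 1) (hwi' : ∫ x, w' x ∂μ = 1)
    {a b : ℝ} (ha : 0 < a)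
    (hR : ∀ x, a * w' x ≤ w x ∧ w x ≤ b * w' x) (x : X) :
    dist (w x) (w' x) ≤ (b / a - 1) * cHi μ m M := by
  have ha1 : a ≤ 1 := by
    have h1 : ∫ x, a * w' x ∂μ ≤ ∫ x, w x ∂μ :=
      integral_mono ((hs.Adm_int hw').const_mul a) (hs.Adm_int hw) fun x => (hR x).1
    rwa [integral_const_mul, hwi, hwi', mul_one] at h1
  have hb1 : 1 ≤ b := by
    have h1 : ∫ x, w x ∂μ ≤ ∫ x, b * w' x ∂μ :=
      integral_mono (hs.Adm_int hw) ((hs.Adm_int hw').const_mul b) fun x => (hR x).2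
    rwa [integral_const_mul, hwi, hwi', mul_one] at h1
  have hba : 0 ≤ b - a := by linarith
  have hstep : |w x - w' x| ≤ (b - a) * cHi μ m M := by
    rw [abs_le]
    constructor
    · have h1 : a * w' x ≤ w x := (hR x).1
      have h2 : w' x ≤ cHi μ m M := (hw'.2 x).2
      have h3 : 0 ≤ w' x := (hs.wpos hw' x).le
      nlinarith
    · have h1 : w x ≤ b * w' x := (hR x).2
      have h2 : w' x ≤ cHi μ m M := (hw'.2 x).2
      have h3 : 0 ≤ w' x := (hs.wpos hw' x).le
      nlinarith
  have hstep2 : (b - a) * cHi μ m M ≤ (b / a - 1) * cHi μ m M := by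
    have hcHi : 0 ≤ cHi μ m M := hs.cHi_pos.le
    have hinv : 1 ≤ a⁻¹ := by
      rw [le_inv_comm₀ zero_lt_one ha]
      simpa using ha1
    have : b - a ≤ b / a - 1 := by
      have h1 : b - a ≤ (b - a) * a⁻¹ := le_mul_of_one_le_right hba hinv
      have h2 : (b - a) * a⁻¹ = b / a - 1 := by
        field_simp
      linarith
    exact mul_le_mul_of_nonneg_right this hcHi
  rw [Real.dist_eq]
  exact hstep.trans hstep2

end step

end Setup

end SchroedingerAux

-- MARK
namespace SchroedingerAux

variable {X Y : Type*} [MeasurableSpace X] [MeasurableSpace Y]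

/-- Existence of a fixed point of the normalized Schrödinger iteration. -/
theorem exists_fixed_point {μ : Measure X} {ν : Measure Y} [IsFiniteMeasure μ]
    [IsFiniteMeasure ν] {ρ₀ : X → ℝ} {ρ₁ : Y → ℝ} {K : X → Y → ℝ} {m M : ℝ}
    (hs : Setup μ ν ρ₀ ρ₁ K m M) :
    ∃ w : X → ℝ, Adm μ m M w ∧ ∀ x, Ttil μ ν ρ₀ ρ₁ K w x = w x := by
  classical
  set V := (μ Set.univ).toReal with hVdef
  have hV : 0 < V := hs.hV
  have hm := hs.hm
  have hM := hs.hM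
  have hmM := hs.hmM
  set T : (X → ℝ) → (X → ℝ) := Ttil μ ν ρ₀ ρ₁ K with hTdef
  set w0 : X → ℝ := fun _ => V⁻¹ with hw0def
  set seq : ℕ → X → ℝ := fun n => T^[n] w0 with hseqdef
  have hseq_succ : ∀ n, seq (n + 1) = T (seq n) := fun n =>
    Function.iterate_succ_apply' T n w0
  have hseq_zero : seq 0 = w0 := rfl
  -- admissibility of the basepoint
  have hadm0 : Adm μ m M w0 := by
    refine ⟨measurable_const, fun x => ⟨?_, ?_⟩⟩
    · show cLo μ m M ≤ V⁻¹
      rw [cLo, div_mul_eq_div_div, div_eq_mul_inv (m / M)]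
      calc m / M * V⁻¹ ≤ 1 * V⁻¹ :=
            mul_le_mul_of_nonneg_right ((div_le_one hM).mpr hmM) (inv_nonneg.mpr hV.le)
        _ = V⁻¹ := one_mul _
    · show V⁻¹ ≤ cHi μ m M
      rw [cHi, div_mul_eq_div_div, div_eq_mul_inv (M / m)]
      calc V⁻¹ = 1 * V⁻¹ := (one_mul _).symm
        _ ≤ M / m * V⁻¹ :=
            mul_le_mul_of_nonneg_right ((one_le_div hm).mpr hmM) (inv_nonneg.mpr hV.le)
  have hint0 : ∫ x, w0 x ∂μ = 1 := by
    simp only [hw0def, integral_const, smul_eq_mul]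
    exact mul_inv_cancel₀ hV.ne'
  have hadm : ∀ n, Adm μ m M (seq n) := by
    intro n
    induction n with
    | zero => exact hadm0
    | succ k ih => rw [hseq_succ]; exact hs.Ttil_adm ih
  have hint1 : ∀ n, ∫ x, seq n x ∂μ = 1 := by
    intro n
    cases n with
    | zero => exact hint0
    | succ k => rw [hseq_succ]; exact hs.Ttil_integral_one (hadm k)
  -- the ratio estimates
  set C0 : ℝ := (cHi μ m M / cLo μ m M) ^ 2 - 1 with hC0def
  have hcLo := hs.cLo_pos
  have hcHi := hs.cHi_pos
  have hratio : ∀ n, ∃ a b : ℝ, 0 < a ∧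
      (∀ x, a * seq (n + 1) x ≤ seq n x ∧ seq n x ≤ b * seq (n + 1) x) ∧
      b / a - 1 ≤ (1 - m / M) ^ n * C0 := by
    intro n
    induction n with
    | zero =>
        refine ⟨cLo μ m M / cHi μ m M, cHi μ m M / cLo μ m M, div_pos hcLo hcHi,
          fun x => ⟨?_, ?_⟩, ?_⟩
        · calc cLo μ m M / cHi μ m M * seq 1 x ≤ cLo μ m M / cHi μ m M * cHi μ m M :=
              mul_le_mul_of_nonneg_left ((hadm 1).2 x).2 (div_pos hcLo hcHi).le
            _ = cLo μ m M := div_mul_cancel₀ _ hcHi.ne'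
            _ ≤ seq 0 x := ((hadm 0).2 x).1
        · calc seq 0 x ≤ cHi μ m M := ((hadm 0).2 x).2
            _ = cHi μ m M / cLo μ m M * cLo μ m M := (div_mul_cancel₀ _ hcLo.ne').symm
            _ ≤ cHi μ m M / cLo μ m M * seq 1 x :=
              mul_le_mul_of_nonneg_left ((hadm 1).2 x).1 (div_pos hcHi hcLo).le
        · have e : cHi μ m M / cLo μ m M / (cLo μ m M / cHi μ m M)
              = (cHi μ m M / cLo μ m M) ^ 2 := by
            field_simp
          rw [e, pow_zero, one_mul, hC0def]
    | succ k ih =>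
        obtain ⟨a, b, ha, hR, hcontr⟩ := ih
        obtain ⟨a', b', ha', hR', hcontr'⟩ := hs.contraction (hadm k) (hadm (k + 1)) ha hR
        refine ⟨a', b', ha', ?_, ?_⟩
        · intro x
          have h := hR' x
          rw [← hTdef, ← hseq_succ (k + 1), ← hseq_succ k] at h
          exact h
        · calc b' / a' - 1 ≤ (1 - m / M) * (b / a - 1) := hcontr'
            _ ≤ (1 - m / M) * ((1 - m / M) ^ k * C0) := by
                have h1 : 0 ≤ 1 - m / M := by
                  rw [sub_nonneg, div_le_one hM]
                  exact hmM
                exact mul_le_mul_of_nonneg_left hcontr h1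
            _ = (1 - m / M) ^ (k + 1) * C0 := by ring
  -- uniform geometric distance bound
  have hdist : ∀ n x, dist (seq n x) (seq (n + 1) x)
      ≤ cHi μ m M * C0 * (1 - m / M) ^ n := by
    intro n x
    obtain ⟨a, b, ha, hR, hcontr⟩ := hratio n
    calc dist (seq n x) (seq (n + 1) x) ≤ (b / a - 1) * cHi μ m M :=
          hs.ratio_dist (hadm n) (hadm (n + 1)) (hint1 n) (hint1 (n + 1)) ha hR x
      _ ≤ (1 - m / M) ^ n * C0 * cHi μ m M :=
          mul_le_mul_of_nonneg_right hcontr hcHi.le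
      _ = cHi μ m M * C0 * (1 - m / M) ^ n := by ring
  have hr1 : (1 : ℝ) - m / M < 1 := by
    have : 0 < m / M := div_pos hm hM
    linarith
  have hcauchy : ∀ x, CauchySeq fun n => seq n x := fun x =>
    cauchySeq_of_le_geometric _ _ hr1 fun n => hdist n x
  set wstar : X → ℝ := fun x => limUnder atTop fun n => seq n x with hwstardef
  have htend : ∀ x, Tendsto (fun n => seq n x) atTop (𝓝 (wstar x)) := fun x =>
    (hcauchy x).tendsto_limUnder
  have hwstarm : Measurable wstar :=
    measurable_of_tendsto_metrizable (fun n => (hadm n).1) (tendsto_pi_nhds.mpr htend)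
  have hadmstar : Adm μ m M wstar := by
    refine ⟨hwstarm, fun x => ⟨?_, ?_⟩⟩
    · exact ge_of_tendsto (htend x) (Filter.Eventually.of_forall fun n => ((hadm n).2 x).1)
    · exact le_of_tendsto (htend x) (Filter.Eventually.of_forall fun n => ((hadm n).2 x).2)
  -- convergence of the operators
  have hwstarpos : ∀ x, 0 < wstar x := hs.wpos hadmstar
  have hBconv : ∀ y, Tendsto (fun n => Bop μ ρ₀ K (seq n) y) atTop
      (𝓝 (Bop μ ρ₀ K wstar y)) := by
    intro y
    refine tendsto_integral_of_dominated_convergence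
      (fun x => M * ((cLo μ m M)⁻¹ * ρ₀ x))
      (fun n => ((hs.hKmeas_right y).mul (hs.hρ₀m.div (hadm n).1)).aestronglyMeasurable)
      (((hs.hρ₀int.const_mul _).const_mul M)) ?_ ?_
    · intro n
      refine Filter.Eventually.of_forall fun x => ?_
      have h0 : 0 ≤ K x y * (ρ₀ x / seq n x) :=
        mul_nonneg (hm.le.trans (hs.hKb x y).1) (hs.rho_div_nonneg (hadm n) x)
      rw [Real.norm_eq_abs, abs_of_nonneg h0]
      calc K x y * (ρ₀ x / seq n x) ≤ M * (ρ₀ x / seq n x) :=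
            mul_le_mul_of_nonneg_right (hs.hKb x y).2 (hs.rho_div_nonneg (hadm n) x)
        _ ≤ M * ((cLo μ m M)⁻¹ * ρ₀ x) :=
            mul_le_mul_of_nonneg_left (hs.rho_div_le (hadm n) x) hM.le
    · refine Filter.Eventually.of_forall fun x => ?_
      exact (tendsto_const_nhds.div (htend x) (hwstarpos x).ne').const_mul (K x y)
  have huconv : ∀ y, Tendsto (fun n => uop μ ρ₀ ρ₁ K (seq n) y) atTop
      (𝓝 (uop μ ρ₀ ρ₁ K wstar y)) := fun y =>
    tendsto_const_nhds.div (hBconv y) (hs.Bop_pos hadmstar y).ne'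
  have hTconv : ∀ x, Tendsto (fun n => Top μ ν ρ₀ ρ₁ K (seq n) x) atTop
      (𝓝 (Top μ ν ρ₀ ρ₁ K wstar x)) := by
    intro x
    refine tendsto_integral_of_dominated_convergence
      (fun y => M * ((m * (cHi μ m M)⁻¹)⁻¹ * ρ₁ y))
      (fun n => ((hs.hKmeas_left x).mul (hs.uop_meas (hadm n))).aestronglyMeasurable)
      (((hs.hρ₁int.const_mul _).const_mul M)) ?_ ?_
    · intro n
      refine Filter.Eventually.of_forall fun y => ?_
      have h0 : 0 ≤ K x y * uop μ ρ₀ ρ₁ K (seq n) y :=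
        mul_nonneg (hm.le.trans (hs.hKb x y).1) (hs.uop_nonneg (hadm n) y)
      rw [Real.norm_eq_abs, abs_of_nonneg h0]
      calc K x y * uop μ ρ₀ ρ₁ K (seq n) y ≤ M * uop μ ρ₀ ρ₁ K (seq n) y :=
            mul_le_mul_of_nonneg_right (hs.hKb x y).2 (hs.uop_nonneg (hadm n) y)
        _ ≤ M * ((m * (cHi μ m M)⁻¹)⁻¹ * ρ₁ y) :=
            mul_le_mul_of_nonneg_left (hs.uop_ub (hadm n) y) hM.le
    · refine Filter.Eventually.of_forall fun y => ?_
      exact (huconv y).const_mul (K x y)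
  have hZconv : Tendsto (fun n => ∫ x, Top μ ν ρ₀ ρ₁ K (seq n) x ∂μ) atTop
      (𝓝 (∫ x, Top μ ν ρ₀ ρ₁ K wstar x ∂μ)) := by
    refine tendsto_integral_of_dominated_convergence
      (fun _ => M * (m * (cHi μ m M)⁻¹)⁻¹)
      (fun n => (hs.Top_meas (hadm n)).aestronglyMeasurable)
      (integrable_const _) ?_ ?_
    · intro n
      refine Filter.Eventually.of_forall fun x => ?_
      rw [Real.norm_eq_abs, abs_of_nonneg (hs.Top_pos (hadm n) x).le]
      exact (hs.Top_ub (hadm n) x).trans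
        (mul_le_mul_of_nonneg_left (hs.Nop_ub (hadm n)) hM.le)
    · exact Filter.Eventually.of_forall hTconv
  refine ⟨wstar, hadmstar, fun x => ?_⟩
  have h1 : Tendsto (fun n => T (seq n) x) atTop (𝓝 (Ttil μ ν ρ₀ ρ₁ K wstar x)) := by
    simp only [hTdef, Ttil]
    exact (hTconv x).div hZconv (hs.Zop_pos hadmstar).ne'
  have h2 : Tendsto (fun n => T (seq n) x) atTop (𝓝 (wstar x)) := by
    have h3 : Tendsto (fun n => seq (n + 1) x) atTop (𝓝 (wstar x)) :=
      (htend x).comp (tendsto_add_atTop_nat 1)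
    refine h3.congr fun n => ?_
    rw [hseq_succ n]
  exact tendsto_nhds_unique h1 h2

/-- Abstract form of the Schrödinger system existence theorem. -/
theorem schroedinger_abstract {μ : Measure X} {ν : Measure Y} [IsFiniteMeasure μ]
    [IsFiniteMeasure ν] {ρ₀ : X → ℝ} {ρ₁ : Y → ℝ} {K : X → Y → ℝ} {m M : ℝ}
    (hs : Setup μ ν ρ₀ ρ₁ K m M) :
    ∃ φ₀ ψ₀ : X → ℝ, ∃ φ₁ ψ₁ : Y → ℝ,
      Measurable φ₀ ∧ Measurable ψ₀ ∧ Measurable φ₁ ∧ Measurable ψ₁ ∧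
      (∀ x, 0 ≤ φ₀ x) ∧ (∀ x, 0 ≤ ψ₀ x) ∧ (∀ y, 0 ≤ φ₁ y) ∧ (∀ y, 0 ≤ ψ₁ y) ∧
      (∀ x, φ₀ x = ∫ y, K x y * φ₁ y ∂ν) ∧
      (∀ y, ψ₁ y = ∫ x, K x y * ψ₀ x ∂μ) ∧
      (∀ x, ρ₀ x = φ₀ x * ψ₀ x) ∧ (∀ y, ρ₁ y = φ₁ y * ψ₁ y) := by
  classical
  obtain ⟨w, hw, hfix⟩ := exists_fixed_point hs
  set Z := ∫ x, Top μ ν ρ₀ ρ₁ K w x ∂μ with hZdef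
  have hZpos : 0 < Z := hs.Zop_pos hw
  have hTopZ : ∀ x, Top μ ν ρ₀ ρ₁ K w x = Z * w x := by
    intro x
    have h := hfix x
    simp only [Ttil, ← hZdef] at h
    rw [div_eq_iff hZpos.ne'] at h
    rw [h]; ring
  set φ₁ : Y → ℝ := uop μ ρ₀ ρ₁ K w with hφ₁def
  set φ₀ : X → ℝ := Top μ ν ρ₀ ρ₁ K w with hφ₀def
  set ψ₀ : X → ℝ := fun x => ρ₀ x / φ₀ x with hψ₀def
  set ψ₁ : Y → ℝ := fun y => ∫ x, K x y * ψ₀ x ∂μ with hψ₁def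
  have hφ₀pos : ∀ x, 0 < φ₀ x := hs.Top_pos hw
  have hwpos : ∀ x, 0 < w x := hs.wpos hw
  have hφ₀m : Measurable φ₀ := hs.Top_meas hw
  have hψ₀m : Measurable ψ₀ := hs.hρ₀m.div hφ₀m
  have hφ₁m : Measurable φ₁ := hs.uop_meas hw
  have hψ₀nn : ∀ x, 0 ≤ ψ₀ x := fun x => div_nonneg (hs.hρ₀nn x) (hφ₀pos x).le
  have hφ₁nn : ∀ y, 0 ≤ φ₁ y := hs.uop_nonneg hw
  have hρid : ∀ x, ρ₀ x = φ₀ x * ψ₀ x := by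
    intro x
    rw [hψ₀def]
    rw [eq_comm, mul_comm, div_mul_cancel₀ _ (hφ₀pos x).ne']
  -- ψ₁ in terms of Bop
  have hψ₁B : ∀ y, ψ₁ y = Bop μ ρ₀ K w y / Z := by
    intro y
    have e : (fun x => K x y * ψ₀ x) = fun x => Z⁻¹ * (K x y * (ρ₀ x / w x)) := by
      funext x
      show K x y * (ρ₀ x / φ₀ x) = Z⁻¹ * (K x y * (ρ₀ x / w x))
      rw [hTopZ x]
      field_simp
    rw [hψ₁def]
    simp only
    rw [e, integral_const_mul]
    rw [div_eq_inv_mul]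
    rfl
  have hψ₁m : Measurable ψ₁ := by
    have e : ψ₁ = fun y => Bop μ ρ₀ K w y / Z := funext hψ₁B
    rw [e]
    exact (hs.Bop_meas hw).div_const _
  have hψ₁nn : ∀ y, 0 ≤ ψ₁ y := by
    intro y
    rw [hψ₁B y]
    exact div_nonneg (hs.Bop_pos hw y).le hZpos.le
  -- integrability of ψ₀ and φ₁
  set N := ∫ y, uop μ ρ₀ ρ₁ K w y ∂ν with hNdef
  have hNpos : 0 < N := hs.Nop_pos hw
  have hψ₀ub : ∀ x, ψ₀ x ≤ (m * N)⁻¹ * ρ₀ x := by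
    intro x
    rw [hψ₀def, inv_mul_eq_div]
    simp only
    gcongr
    · exact hs.hρ₀nn x
    · exact mul_pos hs.hm hNpos
    · exact hs.Top_lb hw x
  have hψ₀int : Integrable ψ₀ μ := by
    refine Integrable.mono' (hs.hρ₀int.const_mul (m * N)⁻¹) hψ₀m.aestronglyMeasurable
      (Filter.Eventually.of_forall fun x => ?_)
    rw [Real.norm_eq_abs, abs_of_nonneg (hψ₀nn x)]
    exact hψ₀ub x
  have hφ₁int : Integrable φ₁ ν := hs.uop_int hw
  -- Fubini: ∫ φ₀ ψ₀ = ∫ φ₁ ψ₁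
  have hswap : ∫ x, φ₀ x * ψ₀ x ∂μ = ∫ y, φ₁ y * ψ₁ y ∂ν := by
    have hprodint : Integrable (Function.uncurry fun x y => ψ₀ x * (K x y * φ₁ y))
        (μ.prod ν) := by
      have hmeas : Measurable (Function.uncurry fun x y => ψ₀ x * (K x y * φ₁ y)) := by
        exact (hψ₀m.comp measurable_fst).mul (hs.hK.mul (hφ₁m.comp measurable_snd))
      refine Integrable.mono' ((hψ₀int.mul_prod hφ₁int).const_mul M)
        hmeas.aestronglyMeasurable (Filter.Eventually.of_forall fun p => ?_)
      have h0 : 0 ≤ ψ₀ p.1 * (K p.1 p.2 * φ₁ p.2) :=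
        mul_nonneg (hψ₀nn p.1) (mul_nonneg (hs.hm.le.trans (hs.hKb p.1 p.2).1) (hφ₁nn p.2))
      simp only [Function.uncurry]
      rw [Real.norm_eq_abs, abs_of_nonneg h0]
      calc ψ₀ p.1 * (K p.1 p.2 * φ₁ p.2) = K p.1 p.2 * (ψ₀ p.1 * φ₁ p.2) := by ring
        _ ≤ M * (ψ₀ p.1 * φ₁ p.2) := mul_le_mul_of_nonneg_right (hs.hKb p.1 p.2).2
            (mul_nonneg (hψ₀nn p.1) (hφ₁nn p.2))
    have hA : ∀ x, φ₀ x * ψ₀ x = ∫ y, ψ₀ x * (K x y * φ₁ y) ∂ν := by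
      intro x
      rw [integral_const_mul]
      rw [mul_comm]
      congr 1
    have hC : ∀ y, ∫ x, ψ₀ x * (K x y * φ₁ y) ∂μ = φ₁ y * ψ₁ y := by
      intro y
      have e : (fun x => ψ₀ x * (K x y * φ₁ y)) = fun x => φ₁ y * (K x y * ψ₀ x) := by
        funext x; ring
      rw [e, integral_const_mul]
    calc ∫ x, φ₀ x * ψ₀ x ∂μ = ∫ x, ∫ y, ψ₀ x * (K x y * φ₁ y) ∂ν ∂μ := by
          exact integral_congr_ae (Filter.Eventually.of_forall hA)
      _ = ∫ y, ∫ x, ψ₀ x * (K x y * φ₁ y) ∂μ ∂ν := integral_integral_swap hprodint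
      _ = ∫ y, φ₁ y * ψ₁ y ∂ν := integral_congr_ae (Filter.Eventually.of_forall hC)
  have hZ1 : Z = 1 := by
    have h1 : ∫ x, φ₀ x * ψ₀ x ∂μ = 1 := by
      have e : (fun x => φ₀ x * ψ₀ x) = ρ₀ := funext fun x => (hρid x).symm
      rw [e]; exact hs.hρ₀i
    have h3 : ∫ y, φ₁ y * ψ₁ y ∂ν = Z⁻¹ := by
      have e : (fun y => φ₁ y * ψ₁ y) = fun y => Z⁻¹ * ρ₁ y := by
        funext y
        rw [hψ₁B y, hφ₁def]
        simp only [uop]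
        field_simp [(hs.Bop_pos hw y).ne', hZpos.ne']
      rw [e, integral_const_mul, hs.hρ₁i, mul_one]
    rw [h1, h3] at hswap
    rw [eq_comm, inv_eq_one] at hswap
    exact hswap
  have hρ₁id : ∀ y, ρ₁ y = φ₁ y * ψ₁ y := by
    intro y
    rw [hψ₁B y, hZ1, div_one, hφ₁def]
    simp only [uop]
    rw [div_mul_cancel₀ _ (hs.Bop_pos hw y).ne']
  exact ⟨φ₀, ψ₀, φ₁, ψ₁, hφ₀m, hψ₀m, hφ₁m, hψ₁m, fun x => (hφ₀pos x).le, hψ₀nn, hφ₁nn,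
    hψ₁nn, fun x => rfl, fun y => rfl, hρid, hρ₁id⟩

end SchroedingerAux

open SchroedingerAux in
/-- existence of a solution of the Schrödinger system on compact
supports `S₀, S₁` for a continuous strictly positive kernel `q`. -/
theorem schroedinger_system_exists (n : ℕ)
    (S₀ S₁ : Set (EuclideanSpace ℝ (Fin n)))
    (hS₀ : IsCompact S₀) (hS₁ : IsCompact S₁)
    (ρ₀ ρ₁ : EuclideanSpace ℝ (Fin n) → ℝ)
    (hρ₀m : Measurable ρ₀) (hρ₁m : Measurable ρ₁)
    (hρ₀nn : ∀ x ∈ S₀, 0 ≤ ρ₀ x) (hρ₁nn : ∀ x ∈ S₁, 0 ≤ ρ₁ x)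
    (hρ₀int : ∫ x in S₀, ρ₀ x = 1) (hρ₁int : ∫ x in S₁, ρ₁ x = 1)
    (q : EuclideanSpace ℝ (Fin n) → EuclideanSpace ℝ (Fin n) → ℝ)
    (hqc : ContinuousOn (fun p : EuclideanSpace ℝ (Fin n) × EuclideanSpace ℝ (Fin n) =>
      q p.1 p.2) (S₀ ×ˢ S₁))
    (hqpos : ∀ x ∈ S₀, ∀ y ∈ S₁, 0 < q x y) :
    ∃ φ₀ ψ₀ φ₁ ψ₁ : EuclideanSpace ℝ (Fin n) → ℝ,
      Measurable φ₀ ∧ Measurable ψ₀ ∧ Measurable φ₁ ∧ Measurable ψ₁ ∧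
      (∀ x ∈ S₀, 0 ≤ φ₀ x ∧ 0 ≤ ψ₀ x) ∧
      (∀ x ∈ S₁, 0 ≤ φ₁ x ∧ 0 ≤ ψ₁ x) ∧
      (∀ x ∈ S₀, φ₀ x = ∫ y in S₁, q x y * φ₁ y) ∧
      (∀ x ∈ S₁, ψ₁ x = ∫ y in S₀, q y x * ψ₀ y) ∧
      (∀ᵐ x ∂(volume.restrict S₀), ρ₀ x = φ₀ x * ψ₀ x) ∧
      (∀ᵐ x ∂(volume.restrict S₁), ρ₁ x = φ₁ x * ψ₁ x) := by
  classical
  have hS₀meas : MeasurableSet S₀ := hS₀.isClosed.measurableSet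
  have hS₁meas : MeasurableSet S₁ := hS₁.isClosed.measurableSet
  -- nonemptiness
  have hS₀ne : S₀.Nonempty := by
    rcases S₀.eq_empty_or_nonempty with h | h
    · exfalso; rw [h] at hρ₀int; simp at hρ₀int
    · exact h
  have hS₁ne : S₁.Nonempty := by
    rcases S₁.eq_empty_or_nonempty with h | h
    · exfalso; rw [h] at hρ₁int; simp at hρ₁int
    · exact h
  -- finite measures
  haveI hμfin : IsFiniteMeasure (volume.restrict S₀) :=
    ⟨by rw [Measure.restrict_apply_univ]; exact hS₀.measure_lt_top⟩
  haveI hνfin : IsFiniteMeasure (volume.restrict S₁) :=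
    ⟨by rw [Measure.restrict_apply_univ]; exact hS₁.measure_lt_top⟩
  -- truncated densities
  set ρ₀' : EuclideanSpace ℝ (Fin n) → ℝ := fun x => max (ρ₀ x) 0 with hρ₀'def
  set ρ₁' : EuclideanSpace ℝ (Fin n) → ℝ := fun x => max (ρ₁ x) 0 with hρ₁'def
  have hρ₀'eq : ∀ x ∈ S₀, ρ₀' x = ρ₀ x := fun x hx => max_eq_left (hρ₀nn x hx)
  have hρ₁'eq : ∀ x ∈ S₁, ρ₁' x = ρ₁ x := fun x hx => max_eq_left (hρ₁nn x hx)
  have hρ₀'i : ∫ x, ρ₀' x ∂(volume.restrict S₀) = 1 := by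
    rw [setIntegral_congr_fun hS₀meas hρ₀'eq]
    exact hρ₀int
  have hρ₁'i : ∫ x, ρ₁' x ∂(volume.restrict S₁) = 1 := by
    rw [setIntegral_congr_fun hS₁meas hρ₁'eq]
    exact hρ₁int
  -- extremal values of q on the compact product
  set P : Set (EuclideanSpace ℝ (Fin n) × EuclideanSpace ℝ (Fin n)) := S₀ ×ˢ S₁ with hPdef
  have hPcomp : IsCompact P := hS₀.prod hS₁
  have hPne : P.Nonempty := hS₀ne.prod hS₁ne
  have hPclosed : IsClosed P := hPcomp.isClosed
  obtain ⟨pmin, hpminP, hpmin⟩ := hPcomp.exists_isMinOn hPne hqc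
  obtain ⟨pmax, hpmaxP, hpmax⟩ := hPcomp.exists_isMaxOn hPne hqc
  set m : ℝ := q pmin.1 pmin.2 with hmdef
  set M : ℝ := q pmax.1 pmax.2 with hMdef
  have hm : 0 < m := hqpos _ hpminP.1 _ hpminP.2
  have hmM : m ≤ M := le_trans (hpmin hpmaxP) (le_refl _)
  have hqmem : ∀ p ∈ P, q p.1 p.2 ∈ Set.Icc m M := fun p hp => ⟨hpmin hp, hpmax hp⟩
  -- Tietze extension of q with values in [m, M]
  have hIccne : (Set.Icc m M).Nonempty := Set.nonempty_Icc.mpr hmM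
  obtain ⟨g, hgmem, hgres⟩ :=
    ContinuousMap.exists_restrict_eq_forall_mem_of_closed
      (⟨_, hqc.restrict⟩ : C(P, ℝ)) (fun p => hqmem p.1 p.2) hIccne hPclosed
  set Q : EuclideanSpace ℝ (Fin n) → EuclideanSpace ℝ (Fin n) → ℝ := fun x y => g (x, y) with hQdef
  have hQeq : ∀ x ∈ S₀, ∀ y ∈ S₁, Q x y = q x y := by
    intro x hx y hy
    have := ContinuousMap.congr_fun hgres ⟨(x, y), ⟨hx, hy⟩⟩
    simpa using this
  have hQmeas : Measurable (Function.uncurry Q) := by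
    have e : Function.uncurry Q = fun p : EuclideanSpace ℝ (Fin n) × EuclideanSpace ℝ (Fin n) => g p := by
      funext p
      simp [Function.uncurry, hQdef]
    rw [e]
    exact g.continuous.measurable
  have hQb : ∀ x y, m ≤ Q x y ∧ Q x y ≤ M := fun x y =>
    ⟨(hgmem (x, y)).1, (hgmem (x, y)).2⟩
  -- the abstract setup
  have hsetup : Setup (volume.restrict S₀) (volume.restrict S₁) ρ₀' ρ₁' Q m M :=
    { hρ₀m := hρ₀m.max measurable_const
      hρ₁m := hρ₁m.max measurable_const
      hρ₀nn := fun x => le_max_right _ _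
      hρ₁nn := fun y => le_max_right _ _
      hρ₀i := hρ₀'i
      hρ₁i := hρ₁'i
      hK := hQmeas
      hm := hm
      hmM := hmM
      hKb := hQb }
  obtain ⟨φ₀, ψ₀, φ₁, ψ₁, hφ₀m, hψ₀m, hφ₁m, hψ₁m, hφ₀nn, hψ₀nn, hφ₁nn, hψ₁nn,
    hφ₀eq, hψ₁eq, hρ₀id, hρ₁id⟩ := schroedinger_abstract hsetup
  refine ⟨φ₀, ψ₀, φ₁, ψ₁, hφ₀m, hψ₀m, hφ₁m, hψ₁m,
    fun x _ => ⟨hφ₀nn x, hψ₀nn x⟩, fun y _ => ⟨hφ₁nn y, hψ₁nn y⟩, ?_, ?_, ?_, ?_⟩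
  · intro x hx
    rw [hφ₀eq x]
    exact setIntegral_congr_fun hS₁meas fun y hy => by rw [hQeq x hx y hy]
  · intro y hy
    rw [hψ₁eq y]
    exact setIntegral_congr_fun hS₀meas fun x hx => by rw [hQeq x hx y hy]
  · rw [ae_restrict_iff' hS₀meas]
    refine Filter.Eventually.of_forall fun x hx => ?_
    calc ρ₀ x = ρ₀' x := (hρ₀'eq x hx).symm
      _ = φ₀ x * ψ₀ x := hρ₀id x
  · rw [ae_restrict_iff' hS₁meas]
    refine Filter.Eventually.of_forall fun y hy => ?_
    calc ρ₁ y = ρ₁' y := (hρ₁'eq y hy).symm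
      _ = φ₁ y * ψ₁ y := hρ₁id y
end
end

section
/- Let S₀, S₁ ⊆ ℝⁿ be compact sets, let ρ₀ and ρ₁ be probability densities on S₀ and S₁ respectively, and let q : S₀ × S₁ → ℝ be continuous and strictly positive. Suppose (φ₀, φ̂₀, φ₁, φ̂₁) and (φ₀', φ̂₀', φ₁', φ̂₁') are two quadruples of nonnegative measurable functions, each satisfying the Schrödinger system: φ₀(x) = ∫_{S₁} q(x,y) φ₁(y) dy, φ̂₁(x) = ∫_{S₀} q(y,x) φ̂₀(y) dy, ρ₀ = φ₀ φ̂₀ a.e. on S₀, and ρ₁ = φ₁ φ̂₁ a.e. on S₁ (and the same with primes). Then there exists a constant c > 0 such that φ₀' = c φ₀, φ₁' = c φ₁, φ̂₀' = c^{-1} φ̂₀ and φ̂₁' = c^{-1} φ̂₁ almost everywhere on the sets where ρ₀ (respectively ρ₁) is positive. -/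
open MeasureTheory
noncomputable section

lemma schro_aux1 {α β : Type*} [MeasurableSpace α] [MeasurableSpace β]
    (μ₀ : Measure α) (μ₁ : Measure β)
    (S₀ : Set α) (S₁ : Set β)
    (hae₀ : ∀ᵐ x ∂μ₀, x ∈ S₀) (hae₁ : ∀ᵐ y ∂μ₁, y ∈ S₁)
    (Q : α → β → ℝ) (ε M : ℝ) (hε : 0 < ε)
    (hQ : ∀ x ∈ S₀, ∀ y ∈ S₁, ε ≤ Q x y ∧ Q x y ≤ M)
    (hQm : ∀ x ∈ S₀, AEStronglyMeasurable (fun y => Q x y) μ₁)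
    (f : β → ℝ) (hfm : AEStronglyMeasurable f μ₁) (hfnn : ∀ᵐ y ∂μ₁, 0 ≤ f y)
    (F ρ G : α → ℝ)
    (hF : ∀ x ∈ S₀, F x = ∫ y, Q x y * f y ∂μ₁)
    (hρ : ∀ᵐ x ∂μ₀, ρ x = F x * G x)
    (hρint : ∫ x, ρ x ∂μ₀ = 1) :
    Integrable f μ₁ ∧ 0 < ∫ y, f y ∂μ₁ ∧
      ∀ x ∈ S₀, ε * ∫ y, f y ∂μ₁ ≤ F x ∧ F x ≤ M * ∫ y, f y ∂μ₁ := by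
  -- helper: if F vanishes on S₀ then contradiction
  have hcontra : ¬ (∀ x ∈ S₀, F x = 0) := by
    intro h
    have hz : ρ =ᵐ[μ₀] 0 := by
      filter_upwards [hae₀, hρ] with x hx hρx
      simp [hρx, h x hx]
    rw [integral_congr_ae hz] at hρint
    simp at hρint
  have hf : Integrable f μ₁ := by
    by_contra hni
    refine hcontra fun x hx => ?_
    rw [hF x hx]
    refine integral_undef fun hint => hni ?_
    refine Integrable.mono' (hint.const_mul ε⁻¹) hfm ?_
    filter_upwards [hae₁, hfnn] with y hy hfy
    have h1 := (hQ x hx y hy).1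
    rw [Real.norm_eq_abs, abs_of_nonneg hfy]
    rw [inv_mul_eq_div, le_div_iff₀ hε]
    nlinarith
  have hInn : 0 ≤ ∫ y, f y ∂μ₁ := integral_nonneg_of_ae hfnn
  have hIpos : 0 < ∫ y, f y ∂μ₁ := by
    rcases hInn.lt_or_eq with h | h
    · exact h
    · exfalso
      have hf0 : f =ᵐ[μ₁] 0 := (integral_eq_zero_iff_of_nonneg_ae hfnn hf).mp h.symm
      refine hcontra fun x hx => ?_
      rw [hF x hx]
      have : (fun y => Q x y * f y) =ᵐ[μ₁] 0 := by
        filter_upwards [hf0] with y hy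
        simp [Pi.zero_apply] at hy ⊢
        simp [hy]
      rw [integral_congr_ae this]
      simp
  refine ⟨hf, hIpos, fun x hx => ?_⟩
  have hker : Integrable (fun y => Q x y * f y) μ₁ := by
    refine Integrable.mono' (hf.const_mul M) ((hQm x hx).mul hfm) ?_
    filter_upwards [hae₁, hfnn] with y hy hfy
    have h1 := (hQ x hx y hy).1
    have h2 := (hQ x hx y hy).2
    rw [Real.norm_eq_abs, abs_of_nonneg (mul_nonneg (hε.le.trans h1) hfy)]
    nlinarith
  constructor
  · rw [hF x hx, ← integral_const_mul]
    refine integral_mono_ae (hf.const_mul ε) hker ?_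
    filter_upwards [hae₁, hfnn] with y hy hfy
    exact mul_le_mul_of_nonneg_right (hQ x hx y hy).1 hfy
  · rw [hF x hx, ← integral_const_mul]
    refine integral_mono_ae hker (hf.const_mul M) ?_
    filter_upwards [hae₁, hfnn] with y hy hfy
    exact mul_le_mul_of_nonneg_right (hQ x hx y hy).2 hfy

lemma ae_prod_fst {α β : Type*} [MeasurableSpace α] [MeasurableSpace β]
    {μ : Measure α} {ν : Measure β} [SFinite ν] {p : α → Prop} (h : ∀ᵐ x ∂μ, p x) :
    ∀ᵐ z ∂μ.prod ν, p z.1 := by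
  rw [ae_iff] at h ⊢
  obtain ⟨N, hsub, hNm, hN0⟩ := exists_measurable_superset_of_null h
  refine measure_mono_null (fun z hz => ?_) (?_ : μ.prod ν (N ×ˢ Set.univ) = 0)
  · exact ⟨hsub hz, Set.mem_univ _⟩
  · rw [Measure.prod_prod, hN0, zero_mul]

lemma ae_prod_snd {α β : Type*} [MeasurableSpace α] [MeasurableSpace β]
    {μ : Measure α} {ν : Measure β} [SFinite ν] {p : β → Prop} (h : ∀ᵐ y ∂ν, p y) :
    ∀ᵐ z ∂μ.prod ν, p z.2 := by
  rw [ae_iff] at h ⊢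
  obtain ⟨N, hsub, hNm, hN0⟩ := exists_measurable_superset_of_null h
  refine measure_mono_null (fun z hz => ?_) (?_ : μ.prod ν (Set.univ ×ˢ N) = 0)
  · exact ⟨Set.mem_univ _, hsub hz⟩
  · rw [Measure.prod_prod, hN0, mul_zero]

lemma exists_mem_of_ae {γ : Type*} [MeasurableSpace γ] {μ : Measure γ}
    {T : Set γ} (hT : μ T ≠ 0) {p : γ → Prop} (h : ∀ᵐ y ∂μ, p y) :
    ∃ y ∈ T, p y := by
  by_contra hc
  push_neg at hc
  exact hT (measure_mono_null (fun y hy => hc y hy) (ae_iff.mp h))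

lemma log_ineq {a b : ℝ} (ha : 0 < a) (hb : 0 < b) :
    0 ≤ (a - b) * (Real.log a - Real.log b) ∧
      ((a - b) * (Real.log a - Real.log b) = 0 → a = b) := by
  rcases lt_trichotomy a b with h | h | h
  · have hl : Real.log a < Real.log b := Real.log_lt_log ha h
    have : 0 < (a - b) * (Real.log a - Real.log b) :=
      mul_pos_of_neg_of_neg (by linarith) (by linarith)
    exact ⟨this.le, fun he => absurd he this.ne'⟩
  · simp [h]
  · have hl : Real.log b < Real.log a := Real.log_lt_log hb h
    have : 0 < (a - b) * (Real.log a - Real.log b) :=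
      mul_pos (by linarith) (by linarith)
    exact ⟨this.le, fun he => absurd he this.ne'⟩

lemma fubini_fst {α β : Type*} [MeasurableSpace α] [MeasurableSpace β]
    (μ₀ : Measure α) (μ₁ : Measure β) [SFinite μ₀] [SFinite μ₁]
    (π : α × β → ℝ) (hπ : Integrable π (μ₀.prod μ₁))
    (k ρ : α → ℝ) (hk : Measurable k) (C : ℝ) (hkb : ∀ᵐ x ∂μ₀, |k x| ≤ C)
    (hmarg : ∀ᵐ x ∂μ₀, ∫ y, π (x, y) ∂μ₁ = ρ x) :
    Integrable (fun z => π z * k z.1) (μ₀.prod μ₁) ∧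
      ∫ z, π z * k z.1 ∂(μ₀.prod μ₁) = ∫ x, ρ x * k x ∂μ₀ := by
  have hint : Integrable (fun z => π z * k z.1) (μ₀.prod μ₁) := by
    refine Integrable.mono' (hπ.abs.const_mul C)
      (hπ.1.mul ((hk.comp measurable_fst).aestronglyMeasurable)) ?_
    filter_upwards [ae_prod_fst (μ := μ₀) (ν := μ₁) hkb] with z hz
    rw [Real.norm_eq_abs, abs_mul]
    have : (0:ℝ) ≤ |π z| := abs_nonneg _
    calc |π z| * |k z.1| ≤ |π z| * C := by
          exact mul_le_mul_of_nonneg_left hz this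
      _ = C * |π z| := mul_comm _ _
  refine ⟨hint, ?_⟩
  rw [integral_prod _ hint]
  refine integral_congr_ae ?_
  filter_upwards [hmarg] with x hx
  rw [integral_mul_const, hx]

lemma fubini_snd {α β : Type*} [MeasurableSpace α] [MeasurableSpace β]
    (μ₀ : Measure α) (μ₁ : Measure β) [SFinite μ₀] [SFinite μ₁]
    (π : α × β → ℝ) (hπ : Integrable π (μ₀.prod μ₁))
    (k ρ : β → ℝ) (hk : Measurable k) (C : ℝ) (hkb : ∀ᵐ y ∂μ₁, |k y| ≤ C)
    (hmarg : ∀ᵐ y ∂μ₁, ∫ x, π (x, y) ∂μ₀ = ρ y) :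
    Integrable (fun z => π z * k z.2) (μ₀.prod μ₁) ∧
      ∫ z, π z * k z.2 ∂(μ₀.prod μ₁) = ∫ y, ρ y * k y ∂μ₁ := by
  have hint : Integrable (fun z => π z * k z.2) (μ₀.prod μ₁) := by
    refine Integrable.mono' (hπ.abs.const_mul C)
      (hπ.1.mul ((hk.comp measurable_snd).aestronglyMeasurable)) ?_
    filter_upwards [ae_prod_snd (μ := μ₀) (ν := μ₁) hkb] with z hz
    rw [Real.norm_eq_abs, abs_mul]
    calc |π z| * |k z.2| ≤ |π z| * C :=
          mul_le_mul_of_nonneg_left hz (abs_nonneg _)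
      _ = C * |π z| := mul_comm _ _
  refine ⟨hint, ?_⟩
  rw [integral_prod_symm _ hint]
  refine integral_congr_ae ?_
  filter_upwards [hmarg] with y hy
  rw [integral_mul_const, hy]

set_option maxHeartbeats 1000000 in
/-- uniqueness, up to a multiplicative constant, of solutions of the
Schrödinger system on compact supports. -/
theorem schroedinger_system_unique (n : ℕ)
    (S₀ S₁ : Set (EuclideanSpace ℝ (Fin n)))
    (hS₀ : IsCompact S₀) (hS₁ : IsCompact S₁)
    (ρ₀ ρ₁ : EuclideanSpace ℝ (Fin n) → ℝ)
    (hρ₀m : Measurable ρ₀) (hρ₁m : Measurable ρ₁)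
    (hρ₀nn : ∀ x ∈ S₀, 0 ≤ ρ₀ x) (hρ₁nn : ∀ x ∈ S₁, 0 ≤ ρ₁ x)
    (hρ₀int : ∫ x in S₀, ρ₀ x = 1) (hρ₁int : ∫ x in S₁, ρ₁ x = 1)
    (q : EuclideanSpace ℝ (Fin n) → EuclideanSpace ℝ (Fin n) → ℝ)
    (hqc : ContinuousOn (fun p : EuclideanSpace ℝ (Fin n) × EuclideanSpace ℝ (Fin n) =>
      q p.1 p.2) (S₀ ×ˢ S₁))
    (hqpos : ∀ x ∈ S₀, ∀ y ∈ S₁, 0 < q x y)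
    -- first quadruple (ψ stands for φ̂)
    (φ₀ ψ₀ φ₁ ψ₁ : EuclideanSpace ℝ (Fin n) → ℝ)
    (hm : Measurable φ₀ ∧ Measurable ψ₀ ∧ Measurable φ₁ ∧ Measurable ψ₁)
    (hnn : (∀ x ∈ S₀, 0 ≤ φ₀ x ∧ 0 ≤ ψ₀ x) ∧ (∀ x ∈ S₁, 0 ≤ φ₁ x ∧ 0 ≤ ψ₁ x))
    (heq1 : ∀ x ∈ S₀, φ₀ x = ∫ y in S₁, q x y * φ₁ y)
    (heq2 : ∀ x ∈ S₁, ψ₁ x = ∫ y in S₀, q y x * ψ₀ y)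
    (heq3 : ∀ᵐ x ∂(volume.restrict S₀), ρ₀ x = φ₀ x * ψ₀ x)
    (heq4 : ∀ᵐ x ∂(volume.restrict S₁), ρ₁ x = φ₁ x * ψ₁ x)
    -- second quadruple
    (φ₀' ψ₀' φ₁' ψ₁' : EuclideanSpace ℝ (Fin n) → ℝ)
    (hm' : Measurable φ₀' ∧ Measurable ψ₀' ∧ Measurable φ₁' ∧ Measurable ψ₁')
    (hnn' : (∀ x ∈ S₀, 0 ≤ φ₀' x ∧ 0 ≤ ψ₀' x) ∧ (∀ x ∈ S₁, 0 ≤ φ₁' x ∧ 0 ≤ ψ₁' x))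
    (heq1' : ∀ x ∈ S₀, φ₀' x = ∫ y in S₁, q x y * φ₁' y)
    (heq2' : ∀ x ∈ S₁, ψ₁' x = ∫ y in S₀, q y x * ψ₀' y)
    (heq3' : ∀ᵐ x ∂(volume.restrict S₀), ρ₀ x = φ₀' x * ψ₀' x)
    (heq4' : ∀ᵐ x ∂(volume.restrict S₁), ρ₁ x = φ₁' x * ψ₁' x) :
    ∃ c : ℝ, 0 < c ∧
      (∀ᵐ x ∂(volume.restrict S₀), 0 < ρ₀ x →
        φ₀' x = c * φ₀ x ∧ ψ₀' x = c⁻¹ * ψ₀ x) ∧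
      (∀ᵐ x ∂(volume.restrict S₁), 0 < ρ₁ x →
        φ₁' x = c * φ₁ x ∧ ψ₁' x = c⁻¹ * ψ₁ x) := by
  classical
  obtain ⟨hφ₀m, hψ₀m, hφ₁m, hψ₁m⟩ := hm
  obtain ⟨hφ₀m', hψ₀m', hφ₁m', hψ₁m'⟩ := hm'
  obtain ⟨hnn₀, hnn₁⟩ := hnn
  obtain ⟨hnn₀', hnn₁'⟩ := hnn'
  have m₀ : MeasurableSet S₀ := hS₀.isClosed.measurableSet
  have m₁ : MeasurableSet S₁ := hS₁.isClosed.measurableSet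
  have hne₀ : S₀.Nonempty := by
    rcases S₀.eq_empty_or_nonempty with h | h
    · exfalso; rw [h] at hρ₀int; simp at hρ₀int
    · exact h
  have hne₁ : S₁.Nonempty := by
    rcases S₁.eq_empty_or_nonempty with h | h
    · exfalso; rw [h] at hρ₁int; simp at hρ₁int
    · exact h
  set μ₀ := volume.restrict S₀ with hμ₀def
  set μ₁ := volume.restrict S₁ with hμ₁def
  haveI : IsFiniteMeasure μ₀ :=
    ⟨by rw [hμ₀def, Measure.restrict_apply_univ]; exact hS₀.measure_lt_top⟩
  haveI : IsFiniteMeasure μ₁ :=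
    ⟨by rw [hμ₁def, Measure.restrict_apply_univ]; exact hS₁.measure_lt_top⟩
  have hae₀ : ∀ᵐ x ∂μ₀, x ∈ S₀ := ae_restrict_mem m₀
  have hae₁ : ∀ᵐ y ∂μ₁, y ∈ S₁ := ae_restrict_mem m₁
  -- min and max of q on the product
  obtain ⟨pm, hpm, hmin⟩ := (hS₀.prod hS₁).exists_isMinOn (hne₀.prod hne₁) hqc
  obtain ⟨pM, hpM, hmax⟩ := (hS₀.prod hS₁).exists_isMaxOn (hne₀.prod hne₁) hqc
  set ε := q pm.1 pm.2 with hεdef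
  set M := q pM.1 pM.2 with hMdef
  have hε : 0 < ε := hqpos pm.1 hpm.1 pm.2 hpm.2
  have hQb : ∀ x ∈ S₀, ∀ y ∈ S₁, ε ≤ q x y ∧ q x y ≤ M := fun x hx y hy =>
    ⟨isMinOn_iff.mp hmin (x, y) (Set.mem_prod.mpr ⟨hx, hy⟩),
      isMaxOn_iff.mp hmax (x, y) (Set.mem_prod.mpr ⟨hx, hy⟩)⟩
  have hQb' : ∀ y ∈ S₁, ∀ x ∈ S₀, ε ≤ q x y ∧ q x y ≤ M := fun y hy x hx => hQb x hx y hy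
  have hQm₀ : ∀ x ∈ S₀, AEStronglyMeasurable (fun y => q x y) μ₁ := by
    intro x hx
    have hc : ContinuousOn (fun y => q x y) S₁ :=
      hqc.comp (Continuous.prodMk_right x).continuousOn (fun y hy => ⟨hx, hy⟩)
    exact (hc.aemeasurable m₁).aestronglyMeasurable
  have hQm₁ : ∀ y ∈ S₁, AEStronglyMeasurable (fun x => q x y) μ₀ := by
    intro y hy
    have hc : ContinuousOn (fun x => q x y) S₀ :=
      hqc.comp (continuous_id.prodMk continuous_const).continuousOn (fun x hx => ⟨hx, hy⟩)
    exact (hc.aemeasurable m₀).aestronglyMeasurable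
  have hφ₁nn : ∀ᵐ y ∂μ₁, 0 ≤ φ₁ y := by
    filter_upwards [hae₁] with y hy; exact (hnn₁ y hy).1
  have hφ₁nn' : ∀ᵐ y ∂μ₁, 0 ≤ φ₁' y := by
    filter_upwards [hae₁] with y hy; exact (hnn₁' y hy).1
  have hψ₀nn : ∀ᵐ x ∂μ₀, 0 ≤ ψ₀ x := by
    filter_upwards [hae₀] with x hx; exact (hnn₀ x hx).2
  have hψ₀nn' : ∀ᵐ x ∂μ₀, 0 ≤ ψ₀' x := by
    filter_upwards [hae₀] with x hx; exact (hnn₀' x hx).2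
  -- the four applications of schro_aux1
  obtain ⟨hφ₁int, hI₁, hbφ₀⟩ := schro_aux1 μ₀ μ₁ S₀ S₁ hae₀ hae₁ q ε M hε hQb hQm₀
    φ₁ hφ₁m.aestronglyMeasurable hφ₁nn φ₀ ρ₀ ψ₀ heq1 heq3 hρ₀int
  obtain ⟨hφ₁int', hI₁', hbφ₀'⟩ := schro_aux1 μ₀ μ₁ S₀ S₁ hae₀ hae₁ q ε M hε hQb hQm₀
    φ₁' hφ₁m'.aestronglyMeasurable hφ₁nn' φ₀' ρ₀ ψ₀' heq1' heq3' hρ₀int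
  obtain ⟨hψ₀int, hJ₀, hbψ₁⟩ := schro_aux1 μ₁ μ₀ S₁ S₀ hae₁ hae₀ (fun y x => q x y) ε M hε
    hQb' hQm₁ ψ₀ hψ₀m.aestronglyMeasurable hψ₀nn ψ₁ ρ₁ φ₁ heq2
    (by filter_upwards [heq4] with y hy; rw [hy, mul_comm]) hρ₁int
  obtain ⟨hψ₀int', hJ₀', hbψ₁'⟩ := schro_aux1 μ₁ μ₀ S₁ S₀ hae₁ hae₀ (fun y x => q x y) ε M hε
    hQb' hQm₁ ψ₀' hψ₀m'.aestronglyMeasurable hψ₀nn' ψ₁' ρ₁ φ₁' heq2'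
    (by filter_upwards [heq4'] with y hy; rw [hy, mul_comm]) hρ₁int
  set I₁ := ∫ y, φ₁ y ∂μ₁
  set I₁' := ∫ y, φ₁' y ∂μ₁
  set J₀ := ∫ x, ψ₀ x ∂μ₀
  set J₀' := ∫ x, ψ₀' x ∂μ₀
  -- positivity of the potentials on the supports
  have hφ₀pos : ∀ x ∈ S₀, 0 < φ₀ x := fun x hx =>
    lt_of_lt_of_le (mul_pos hε hI₁) (hbφ₀ x hx).1
  have hφ₀pos' : ∀ x ∈ S₀, 0 < φ₀' x := fun x hx =>
    lt_of_lt_of_le (mul_pos hε hI₁') (hbφ₀' x hx).1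
  have hψ₁pos : ∀ y ∈ S₁, 0 < ψ₁ y := fun y hy =>
    lt_of_lt_of_le (mul_pos hε hJ₀) (hbψ₁ y hy).1
  have hψ₁pos' : ∀ y ∈ S₁, 0 < ψ₁' y := fun y hy =>
    lt_of_lt_of_le (mul_pos hε hJ₀') (hbψ₁' y hy).1
  -- the log-ratio functions
  set g : EuclideanSpace ℝ (Fin n) → ℝ := fun x => Real.log (φ₀' x) - Real.log (φ₀ x)
    with hgdef
  set h : EuclideanSpace ℝ (Fin n) → ℝ := fun y => Real.log (ψ₁' y) - Real.log (ψ₁ y)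
    with hhdef
  have hgm : Measurable g := (Real.measurable_log.comp hφ₀m').sub (Real.measurable_log.comp hφ₀m)
  have hhm : Measurable h := (Real.measurable_log.comp hψ₁m').sub (Real.measurable_log.comp hψ₁m)
  set Cg : ℝ := |Real.log (ε * I₁')| + |Real.log (M * I₁)| + |Real.log (M * I₁')| +
    |Real.log (ε * I₁)| with hCgdef
  set Ch : ℝ := |Real.log (ε * J₀')| + |Real.log (M * J₀)| + |Real.log (M * J₀')| +
    |Real.log (ε * J₀)| with hChdef
  have hgb : ∀ᵐ x ∂μ₀, |g x| ≤ Cg := by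
    filter_upwards [hae₀] with x hx
    obtain ⟨l1, u1⟩ := hbφ₀ x hx
    obtain ⟨l2, u2⟩ := hbφ₀' x hx
    have e1 : Real.log (ε * I₁') ≤ Real.log (φ₀' x) := Real.log_le_log (mul_pos hε hI₁') l2
    have e2 : Real.log (φ₀' x) ≤ Real.log (M * I₁') :=
      Real.log_le_log (hφ₀pos' x hx) u2
    have e3 : Real.log (ε * I₁) ≤ Real.log (φ₀ x) := Real.log_le_log (mul_pos hε hI₁) l1
    have e4 : Real.log (φ₀ x) ≤ Real.log (M * I₁) := Real.log_le_log (hφ₀pos x hx) u1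
    rw [abs_le]
    simp only [hgdef, hCgdef]
    constructor
    · linarith [e1, e2, e3, e4, neg_abs_le (Real.log (ε * I₁')), le_abs_self (Real.log (M * I₁)),
        abs_nonneg (Real.log (M * I₁')), abs_nonneg (Real.log (ε * I₁)),
        neg_abs_le (Real.log (M * I₁')), le_abs_self (Real.log (ε * I₁))]
    · linarith [e1, e2, e3, e4, le_abs_self (Real.log (M * I₁')), neg_abs_le (Real.log (ε * I₁)),
        abs_nonneg (Real.log (ε * I₁')), abs_nonneg (Real.log (M * I₁)),
        le_abs_self (Real.log (ε * I₁')), neg_abs_le (Real.log (M * I₁))]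
  have hhb : ∀ᵐ y ∂μ₁, |h y| ≤ Ch := by
    filter_upwards [hae₁] with y hy
    obtain ⟨l1, u1⟩ := hbψ₁ y hy
    obtain ⟨l2, u2⟩ := hbψ₁' y hy
    have e1 : Real.log (ε * J₀') ≤ Real.log (ψ₁' y) := Real.log_le_log (mul_pos hε hJ₀') l2
    have e2 : Real.log (ψ₁' y) ≤ Real.log (M * J₀') :=
      Real.log_le_log (hψ₁pos' y hy) u2
    have e3 : Real.log (ε * J₀) ≤ Real.log (ψ₁ y) := Real.log_le_log (mul_pos hε hJ₀) l1
    have e4 : Real.log (ψ₁ y) ≤ Real.log (M * J₀) := Real.log_le_log (hψ₁pos y hy) u1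
    rw [abs_le]
    simp only [hhdef, hChdef]
    constructor
    · linarith [e1, e2, e3, e4, neg_abs_le (Real.log (ε * J₀')), le_abs_self (Real.log (M * J₀)),
        abs_nonneg (Real.log (M * J₀')), abs_nonneg (Real.log (ε * J₀)),
        neg_abs_le (Real.log (M * J₀')), le_abs_self (Real.log (ε * J₀))]
    · linarith [e1, e2, e3, e4, le_abs_self (Real.log (M * J₀')), neg_abs_le (Real.log (ε * J₀)),
        abs_nonneg (Real.log (ε * J₀')), abs_nonneg (Real.log (M * J₀)),
        le_abs_self (Real.log (ε * J₀')), neg_abs_le (Real.log (M * J₀))]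
  -- a.e. representations of the hat potentials
  have P0 : ∀ᵐ x ∂μ₀, ρ₀ x / φ₀ x = ψ₀ x := by
    filter_upwards [hae₀, heq3] with x hx h3
    rw [h3]; exact mul_div_cancel_left₀ _ (hφ₀pos x hx).ne'
  have P0' : ∀ᵐ x ∂μ₀, ρ₀ x / φ₀' x = ψ₀' x := by
    filter_upwards [hae₀, heq3'] with x hx h3
    rw [h3]; exact mul_div_cancel_left₀ _ (hφ₀pos' x hx).ne'
  have P1 : ∀ᵐ y ∂μ₁, ρ₁ y / ψ₁ y = φ₁ y := by
    filter_upwards [hae₁, heq4] with y hy h4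
    rw [h4]; exact mul_div_cancel_right₀ _ (hψ₁pos y hy).ne'
  have P1' : ∀ᵐ y ∂μ₁, ρ₁ y / ψ₁' y = φ₁' y := by
    filter_upwards [hae₁, heq4'] with y hy h4
    rw [h4]; exact mul_div_cancel_right₀ _ (hψ₁pos' y hy).ne'
  -- the two entropic couplings
  set π : EuclideanSpace ℝ (Fin n) × EuclideanSpace ℝ (Fin n) → ℝ :=
    fun z => q z.1 z.2 * (ρ₀ z.1 / φ₀ z.1) * (ρ₁ z.2 / ψ₁ z.2) with hπdef
  set π' : EuclideanSpace ℝ (Fin n) × EuclideanSpace ℝ (Fin n) → ℝ :=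
    fun z => q z.1 z.2 * (ρ₀ z.1 / φ₀' z.1) * (ρ₁ z.2 / ψ₁' z.2) with hπ'def
  have hqsm : AEStronglyMeasurable (fun z : EuclideanSpace ℝ (Fin n) ×
      EuclideanSpace ℝ (Fin n) => q z.1 z.2) (μ₀.prod μ₁) := by
    rw [hμ₀def, hμ₁def, Measure.prod_restrict]
    exact (hqc.aemeasurable (m₀.prod m₁)).aestronglyMeasurable
  have hπsm : AEStronglyMeasurable π (μ₀.prod μ₁) :=
    (hqsm.mul ((hρ₀m.div hφ₀m).comp measurable_fst).aestronglyMeasurable).mul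
      ((hρ₁m.div hψ₁m).comp measurable_snd).aestronglyMeasurable
  have hπsm' : AEStronglyMeasurable π' (μ₀.prod μ₁) :=
    (hqsm.mul ((hρ₀m.div hφ₀m').comp measurable_fst).aestronglyMeasurable).mul
      ((hρ₁m.div hψ₁m').comp measurable_snd).aestronglyMeasurable
  have hπint : Integrable π (μ₀.prod μ₁) := by
    refine Integrable.mono' ((hψ₀int.mul_prod hφ₁int).const_mul M) hπsm ?_
    filter_upwards [ae_prod_fst (μ := μ₀) (ν := μ₁) hae₀, ae_prod_snd (μ := μ₀) (ν := μ₁) hae₁,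
      ae_prod_fst (μ := μ₀) (ν := μ₁) P0, ae_prod_snd (μ := μ₀) (ν := μ₁) P1]
      with z hz1 hz2 hzP0 hzP1
    simp only [hπdef]
    rw [hzP0, hzP1, Real.norm_eq_abs]
    have hq := hQb z.1 hz1 z.2 hz2
    have hψ := (hnn₀ z.1 hz1).2
    have hφ := (hnn₁ z.2 hz2).1
    rw [abs_of_nonneg (mul_nonneg (mul_nonneg (le_trans hε.le hq.1) hψ) hφ)]
    calc q z.1 z.2 * ψ₀ z.1 * φ₁ z.2 ≤ M * ψ₀ z.1 * φ₁ z.2 :=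
          mul_le_mul_of_nonneg_right (mul_le_mul_of_nonneg_right hq.2 hψ) hφ
      _ = M * (ψ₀ z.1 * φ₁ z.2) := by ring
  have hπint' : Integrable π' (μ₀.prod μ₁) := by
    refine Integrable.mono' ((hψ₀int'.mul_prod hφ₁int').const_mul M) hπsm' ?_
    filter_upwards [ae_prod_fst (μ := μ₀) (ν := μ₁) hae₀, ae_prod_snd (μ := μ₀) (ν := μ₁) hae₁,
      ae_prod_fst (μ := μ₀) (ν := μ₁) P0', ae_prod_snd (μ := μ₀) (ν := μ₁) P1']
      with z hz1 hz2 hzP0 hzP1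
    simp only [hπ'def]
    rw [hzP0, hzP1, Real.norm_eq_abs]
    have hq := hQb z.1 hz1 z.2 hz2
    have hψ := (hnn₀' z.1 hz1).2
    have hφ := (hnn₁' z.2 hz2).1
    rw [abs_of_nonneg (mul_nonneg (mul_nonneg (le_trans hε.le hq.1) hψ) hφ)]
    calc q z.1 z.2 * ψ₀' z.1 * φ₁' z.2 ≤ M * ψ₀' z.1 * φ₁' z.2 :=
          mul_le_mul_of_nonneg_right (mul_le_mul_of_nonneg_right hq.2 hψ) hφ
      _ = M * (ψ₀' z.1 * φ₁' z.2) := by ring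
  -- marginals
  have Mg : ∀ᵐ x ∂μ₀, ∫ y, π (x, y) ∂μ₁ = ρ₀ x := by
    filter_upwards [hae₀] with x hx
    have hcong : ∀ᵐ y ∂μ₁, π (x, y) = (ρ₀ x / φ₀ x) * (q x y * φ₁ y) := by
      filter_upwards [P1] with y hy
      simp only [hπdef]; rw [← hy]; ring
    rw [integral_congr_ae hcong, integral_const_mul, ← heq1 x hx]
    exact div_mul_cancel₀ (ρ₀ x) (hφ₀pos x hx).ne'
  have Mg' : ∀ᵐ x ∂μ₀, ∫ y, π' (x, y) ∂μ₁ = ρ₀ x := by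
    filter_upwards [hae₀] with x hx
    have hcong : ∀ᵐ y ∂μ₁, π' (x, y) = (ρ₀ x / φ₀' x) * (q x y * φ₁' y) := by
      filter_upwards [P1'] with y hy
      simp only [hπ'def]; rw [← hy]; ring
    rw [integral_congr_ae hcong, integral_const_mul, ← heq1' x hx]
    exact div_mul_cancel₀ (ρ₀ x) (hφ₀pos' x hx).ne'
  have Mh : ∀ᵐ y ∂μ₁, ∫ x, π (x, y) ∂μ₀ = ρ₁ y := by
    filter_upwards [hae₁] with y hy
    have hcong : ∀ᵐ x ∂μ₀, π (x, y) = (ρ₁ y / ψ₁ y) * (q x y * ψ₀ x) := by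
      filter_upwards [P0] with x hx
      simp only [hπdef]; rw [← hx]; ring
    rw [integral_congr_ae hcong, integral_const_mul, ← heq2 y hy]
    exact div_mul_cancel₀ (ρ₁ y) (hψ₁pos y hy).ne'
  have Mh' : ∀ᵐ y ∂μ₁, ∫ x, π' (x, y) ∂μ₀ = ρ₁ y := by
    filter_upwards [hae₁] with y hy
    have hcong : ∀ᵐ x ∂μ₀, π' (x, y) = (ρ₁ y / ψ₁' y) * (q x y * ψ₀' x) := by
      filter_upwards [P0'] with x hx
      simp only [hπ'def]; rw [← hx]; ring
    rw [integral_congr_ae hcong, integral_const_mul, ← heq2' y hy]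
    exact div_mul_cancel₀ (ρ₁ y) (hψ₁pos' y hy).ne'
  -- Fubini pieces
  obtain ⟨i1, e1⟩ := fubini_fst μ₀ μ₁ π hπint g ρ₀ hgm Cg hgb Mg
  obtain ⟨i2, e2⟩ := fubini_fst μ₀ μ₁ π' hπint' g ρ₀ hgm Cg hgb Mg'
  obtain ⟨i3, e3⟩ := fubini_snd μ₀ μ₁ π hπint h ρ₁ hhm Ch hhb Mh
  obtain ⟨i4, e4⟩ := fubini_snd μ₀ μ₁ π' hπint' h ρ₁ hhm Ch hhb Mh'
  set W : EuclideanSpace ℝ (Fin n) × EuclideanSpace ℝ (Fin n) → ℝ :=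
    fun z => (π z - π' z) * (g z.1 + h z.2) with hWdef
  have hWint : Integrable W (μ₀.prod μ₁) := by
    refine ((i1.add i3).sub (i2.add i4)).congr
      (Filter.Eventually.of_forall fun z => ?_)
    simp only [hWdef, Pi.add_apply, Pi.sub_apply]
    ring
  have hWzero : ∫ z, W z ∂(μ₀.prod μ₁) = 0 := by
    have hrw : ∫ z, W z ∂(μ₀.prod μ₁) = ∫ z, ((π z * g z.1 + π z * h z.2) -
        (π' z * g z.1 + π' z * h z.2)) ∂(μ₀.prod μ₁) :=
      integral_congr_ae (Filter.Eventually.of_forall fun z => by simp only [hWdef]; ring)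
    have iA : Integrable (fun z => π z * g z.1 + π z * h z.2) (μ₀.prod μ₁) := i1.add i3
    have iB : Integrable (fun z => π' z * g z.1 + π' z * h z.2) (μ₀.prod μ₁) := i2.add i4
    rw [hrw, integral_sub iA iB, integral_add i1 i3, integral_add i2 i4,
      e1, e2, e3, e4]
    ring
  -- pointwise sign and equality analysis
  have hWsign : ∀ᵐ z ∂(μ₀.prod μ₁), 0 ≤ W z ∧
      (W z = 0 → (0 < ρ₀ z.1 → 0 < ρ₁ z.2 → g z.1 + h z.2 = 0)) := by
    filter_upwards [ae_prod_fst (μ := μ₀) (ν := μ₁) hae₀, ae_prod_snd (μ := μ₀) (ν := μ₁) hae₁]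
      with z hz1 hz2
    by_cases hr0 : 0 < ρ₀ z.1
    · by_cases hr1 : 0 < ρ₁ z.2
      · have hq := hqpos z.1 hz1 z.2 hz2
        have ha := hφ₀pos z.1 hz1
        have ha' := hφ₀pos' z.1 hz1
        have hu := hψ₁pos z.2 hz2
        have hu' := hψ₁pos' z.2 hz2
        have hπpos : 0 < π z := by
          simp only [hπdef]
          exact mul_pos (mul_pos hq (div_pos hr0 ha)) (div_pos hr1 hu)
        have hπpos' : 0 < π' z := by
          simp only [hπ'def]
          exact mul_pos (mul_pos hq (div_pos hr0 ha')) (div_pos hr1 hu')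
        have hlog : Real.log (π z) - Real.log (π' z) = g z.1 + h z.2 := by
          simp only [hπdef, hπ'def, hgdef, hhdef]
          rw [Real.log_mul (mul_ne_zero hq.ne' (div_ne_zero hr0.ne' ha.ne'))
              (div_ne_zero hr1.ne' hu.ne'),
            Real.log_mul hq.ne' (div_ne_zero hr0.ne' ha.ne'),
            Real.log_mul (mul_ne_zero hq.ne' (div_ne_zero hr0.ne' ha'.ne'))
              (div_ne_zero hr1.ne' hu'.ne'),
            Real.log_mul hq.ne' (div_ne_zero hr0.ne' ha'.ne'),
            Real.log_div hr0.ne' ha.ne', Real.log_div hr1.ne' hu.ne',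
            Real.log_div hr0.ne' ha'.ne', Real.log_div hr1.ne' hu'.ne']
          ring
        constructor
        · have := (log_ineq hπpos hπpos').1
          simp only [hWdef]
          rw [← hlog]
          exact this
        · intro hW0 _ _
          have hWlog : (π z - π' z) * (Real.log (π z) - Real.log (π' z)) = 0 := by
            simp only [hWdef] at hW0
            rw [hlog]; exact hW0
          have := (log_ineq hπpos hπpos').2 hWlog
          rw [← hlog, this, sub_self]
      · have h0 : ρ₁ z.2 = 0 := le_antisymm (not_lt.mp hr1) (hρ₁nn z.2 hz2)
        have hz : W z = 0 := by simp [hWdef, hπdef, hπ'def, h0]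
        exact ⟨le_of_eq hz.symm, fun _ _ hc => absurd hc hr1⟩
    · have h0 : ρ₀ z.1 = 0 := le_antisymm (not_lt.mp hr0) (hρ₀nn z.1 hz1)
      have hz : W z = 0 := by simp [hWdef, hπdef, hπ'def, h0]
      exact ⟨le_of_eq hz.symm, fun _ hc => absurd hc hr0⟩
  have hW0ae : W =ᵐ[μ₀.prod μ₁] 0 := by
    refine (integral_eq_zero_iff_of_nonneg_ae ?_ hWint).mp hWzero
    filter_upwards [hWsign] with z hz; exact hz.1
  have KEY : ∀ᵐ z ∂(μ₀.prod μ₁), 0 < ρ₀ z.1 → 0 < ρ₁ z.2 → g z.1 + h z.2 = 0 := by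
    filter_upwards [hW0ae, hWsign] with z hz0 hzs
    exact hzs.2 hz0
  have K1 : ∀ᵐ x ∂μ₀, ∀ᵐ y ∂μ₁, (0 < ρ₀ x → 0 < ρ₁ y → g x + h y = 0) :=
    Measure.ae_ae_of_ae_prod KEY
  -- the supports have positive measure
  have hT₀ : μ₀ {x | 0 < ρ₀ x} ≠ 0 := by
    intro h0
    have hle : ∀ᵐ x ∂μ₀, ¬ (0 < ρ₀ x) := by
      rw [ae_iff]; simpa using h0
    have hz : ρ₀ =ᵐ[μ₀] 0 := by
      filter_upwards [hae₀, hle] with x hx hxle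
      exact le_antisymm (not_lt.mp hxle) (hρ₀nn x hx)
    rw [integral_congr_ae hz] at hρ₀int
    simp at hρ₀int
  have hT₁ : μ₁ {y | 0 < ρ₁ y} ≠ 0 := by
    intro h0
    have hle : ∀ᵐ y ∂μ₁, ¬ (0 < ρ₁ y) := by
      rw [ae_iff]; simpa using h0
    have hz : ρ₁ =ᵐ[μ₁] 0 := by
      filter_upwards [hae₁, hle] with y hy hyle
      exact le_antisymm (not_lt.mp hyle) (hρ₁nn y hy)
    rw [integral_congr_ae hz] at hρ₁int
    simp at hρ₁int
  -- pick x₀ in the support satisfying the a.e. relation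
  obtain ⟨x₀, hx₀T, hx₀⟩ := exists_mem_of_ae hT₀ K1
  have hx₀pos : 0 < ρ₀ x₀ := hx₀T
  have hcY : ∀ᵐ y ∂μ₁, 0 < ρ₁ y → h y = -g x₀ := by
    filter_upwards [hx₀] with y hy hr
    have := hy hx₀pos hr
    linarith
  have hgconst : ∀ᵐ x ∂μ₀, 0 < ρ₀ x → g x = g x₀ := by
    filter_upwards [K1] with x hx hrx
    obtain ⟨y, hyT, hy1, hy2⟩ := exists_mem_of_ae hT₁ (hx.and hcY)
    have e1 := hy1 hrx hyT
    have e2 := hy2 hyT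
    linarith
  set c : ℝ := Real.exp (g x₀) with hcdef
  have hcpos : 0 < c := Real.exp_pos _
  refine ⟨c, hcpos, ?_, ?_⟩
  · filter_upwards [hae₀, hgconst, P0, P0'] with x hx hgx hP0x hP0x'
    intro hr
    have hgx := hgx hr
    have hφ : φ₀' x = c * φ₀ x := by
      have e1 : Real.log (φ₀' x) = g x₀ + Real.log (φ₀ x) := by
        rw [← hgx]; simp only [hgdef]; ring
      calc φ₀' x = Real.exp (Real.log (φ₀' x)) := (Real.exp_log (hφ₀pos' x hx)).symm
        _ = Real.exp (g x₀) * Real.exp (Real.log (φ₀ x)) := by rw [e1, Real.exp_add]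
        _ = c * φ₀ x := by rw [Real.exp_log (hφ₀pos x hx), hcdef]
    refine ⟨hφ, ?_⟩
    rw [← hP0x', ← hP0x, hφ, div_mul_eq_div_div_swap, div_eq_inv_mul]
  · filter_upwards [hae₁, hcY, P1, P1'] with y hy hhy hP1y hP1y'
    intro hr
    have hhy := hhy hr
    have hψ : ψ₁' y = c⁻¹ * ψ₁ y := by
      have e1 : Real.log (ψ₁' y) = -g x₀ + Real.log (ψ₁ y) := by
        rw [← hhy]; simp only [hhdef]; ring
      calc ψ₁' y = Real.exp (Real.log (ψ₁' y)) := (Real.exp_log (hψ₁pos' y hy)).symm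
        _ = Real.exp (-g x₀) * Real.exp (Real.log (ψ₁ y)) := by rw [e1, Real.exp_add]
        _ = c⁻¹ * ψ₁ y := by rw [Real.exp_log (hψ₁pos y hy), hcdef, Real.exp_neg]
    refine ⟨?_, hψ⟩
    rw [← hP1y', ← hP1y, hψ, div_mul_eq_div_div_swap, div_eq_inv_mul, inv_inv]
end
end

section
/- Let S ⊆ ℝⁿ be a Borel set of finite positive Lebesgue measure and let f, g ∈ L∞₊(S) satisfy ∫_S f(x)² dx = ∫_S g(x)² dx = 1. Then m(f,g) ≤ 1 ≤ M(f,g) and ‖f − g‖_{L²(S)} ≤ M(f,g) − m(f,g) ≤ exp(d_H(f,g)) − 1. -/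
open MeasureTheory

noncomputable section

/-- `L∞₊(S)`: measurable real functions bounded below and above by positive
constants a.e. on `S` (w.r.t. Lebesgue measure restricted to `S`). -/
def MemLinfPos {α : Type*} [MeasurableSpace α] (μ : Measure α) (f : α → ℝ) : Prop :=
  Measurable f ∧ ∃ c K : ℝ, 0 < c ∧ c ≤ K ∧ ∀ᵐ x ∂μ, c ≤ f x ∧ f x ≤ K

/-- `M(f,g) = essSup (f/g)`. -/
def Mratio {α : Type*} [MeasurableSpace α] (μ : Measure α) (f g : α → ℝ) : ℝ :=
  essSup (fun x => f x / g x) μ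

/-- `m(f,g) = essInf (f/g)`. -/
def mratio {α : Type*} [MeasurableSpace α] (μ : Measure α) (f g : α → ℝ) : ℝ :=
  essInf (fun x => f x / g x) μ

/-- Hilbert projective metric `d_H(f,g) = log (M(f,g)/m(f,g))`. -/
def hilbertDist {α : Type*} [MeasurableSpace α] (μ : Measure α) (f g : α → ℝ) : ℝ :=
  Real.log (Mratio μ f g / mratio μ f g)


private lemma aux_final_arith (M m : ℝ) (hmpos : 0 < m) (hm1 : m ≤ 1) (hmM : m ≤ M) :
    M - m ≤ M / m - 1 := by
  rw [div_sub_one hmpos.ne', le_div_iff₀ hmpos]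
  nlinarith [mul_nonneg (sub_nonneg.2 hmM) (sub_nonneg.2 hm1)]

/-- for `L²`-normalized `f, g ∈ L∞₊(S)` one has
`m(f,g) ≤ 1 ≤ M(f,g)` and `‖f-g‖₂ ≤ M(f,g) - m(f,g) ≤ exp(d_H(f,g)) - 1`. -/
theorem L2_dist_le_hilbert (n : ℕ)
    (S : Set (EuclideanSpace ℝ (Fin n))) (hSm : MeasurableSet S)
    (hSpos : 0 < volume S) (hSfin : volume S < ⊤)
    (f g : EuclideanSpace ℝ (Fin n) → ℝ)
    (hf : MemLinfPos (volume.restrict S) f) (hg : MemLinfPos (volume.restrict S) g)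
    (hfnorm : ∫ x in S, (f x) ^ 2 = 1) (hgnorm : ∫ x in S, (g x) ^ 2 = 1) :
    mratio (volume.restrict S) f g ≤ 1 ∧ 1 ≤ Mratio (volume.restrict S) f g ∧
    Real.sqrt (∫ x in S, (f x - g x) ^ 2) ≤
      Mratio (volume.restrict S) f g - mratio (volume.restrict S) f g ∧
    Mratio (volume.restrict S) f g - mratio (volume.restrict S) f g ≤
      Real.exp (hilbertDist (volume.restrict S) f g) - 1 := by

  set μ := volume.restrict S with hμ
  obtain ⟨hfm, cf, Kf, hcf, hcKf, hfb⟩ := hf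
  obtain ⟨hgm, cg, Kg, hcg, hcKg, hgb⟩ := hg
  have hKg : (0:ℝ) < Kg := hcg.trans_le hcKg
  have hKf : (0:ℝ) < Kf := hcf.trans_le hcKf
  haveI : IsFiniteMeasure μ := ⟨by simpa [hμ, Measure.restrict_apply_univ] using hSfin⟩
  have hμne : μ ≠ 0 := by
    intro h
    have h2 : μ S = 0 := by simp [h]
    rw [hμ, Measure.restrict_apply_self] at h2
    exact absurd h2 hSpos.ne'
  haveI : (ae μ).NeBot := ae_neBot.2 hμne
  -- a.e. bounds on the ratio
  have hub : ∀ᵐ x ∂μ, f x / g x ≤ Kf / cg := by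
    filter_upwards [hfb, hgb] with x hx hy
    exact div_le_div₀ hKf.le hx.2 hcg hy.1
  have hlb : ∀ᵐ x ∂μ, cf / Kg ≤ f x / g x := by
    filter_upwards [hfb, hgb] with x hx hy
    exact div_le_div₀ (hcf.le.trans hx.1) hx.1 (hcg.trans_le hy.1) hy.2
  have hBU : Filter.IsBoundedUnder (· ≤ ·) (ae μ) (fun x => f x / g x) :=
    ⟨Kf / cg, Filter.eventually_map.2 hub⟩
  have hBL : Filter.IsBoundedUnder (· ≥ ·) (ae μ) (fun x => f x / g x) :=
    ⟨cf / Kg, Filter.eventually_map.2 hlb⟩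
  set M := Mratio μ f g with hM
  set m := mratio μ f g with hm
  have haeM : ∀ᵐ x ∂μ, f x / g x ≤ M := ae_le_essSup hBU
  have haem : ∀ᵐ x ∂μ, m ≤ f x / g x := ae_essInf_le hBL
  have hmlb : cf / Kg ≤ m := Filter.le_liminf_of_le hBU.isCoboundedUnder_ge hlb
  have hmpos : 0 < m := lt_of_lt_of_le (by positivity) hmlb
  have hmM : m ≤ M := by
    obtain ⟨x, hx1, hx2⟩ := (haem.and haeM).exists
    exact hx1.trans hx2
  have hMpos : 0 < M := hmpos.trans_le hmM
  -- pointwise sandwich  m g ≤ f ≤ M g,  with positivity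
  have hsand : ∀ᵐ x ∂μ, m * g x ≤ f x ∧ f x ≤ M * g x ∧ 0 < g x ∧ 0 < f x := by
    filter_upwards [haeM, haem, hfb, hgb] with x h1 h2 h3 h4
    have hgx : 0 < g x := hcg.trans_le h4.1
    have hfx : 0 < f x := hcf.trans_le h3.1
    refine ⟨?_, ?_, hgx, hfx⟩
    · rw [le_div_iff₀ hgx] at h2; linarith
    · rw [div_le_iff₀ hgx] at h1; linarith
  -- integrability
  have hmf : Measurable f := hfm
  have hmg : Measurable g := hgm
  have intf2 : Integrable (fun x => f x ^ 2) μ := by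
    refine ⟨((hmf.pow_const 2).aestronglyMeasurable), HasFiniteIntegral.of_bounded (C := Kf ^ 2) ?_⟩
    filter_upwards [hfb] with x hx
    rw [Real.norm_eq_abs, abs_of_nonneg (sq_nonneg _)]
    nlinarith [hx.1, hx.2, hcf]
  have intg2 : Integrable (fun x => g x ^ 2) μ := by
    refine ⟨((hmg.pow_const 2).aestronglyMeasurable), HasFiniteIntegral.of_bounded (C := Kg ^ 2) ?_⟩
    filter_upwards [hgb] with x hx
    rw [Real.norm_eq_abs, abs_of_nonneg (sq_nonneg _)]
    nlinarith [hx.1, hx.2, hcg]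
  have intfg : Integrable (fun x => f x * g x) μ := by
    refine ⟨((hmf.mul hmg).aestronglyMeasurable), HasFiniteIntegral.of_bounded (C := Kf * Kg) ?_⟩
    filter_upwards [hfb, hgb] with x hx hy
    rw [Real.norm_eq_abs, abs_mul]
    have h1 : |f x| ≤ Kf := abs_le.2 ⟨by linarith, hx.2⟩
    have h2 : |g x| ≤ Kg := abs_le.2 ⟨by linarith, hy.2⟩
    exact mul_le_mul h1 h2 (abs_nonneg _) hKf.le
  -- basic integral comparisons
  have hm1 : m ≤ 1 := by
    have key : ∫ x, m ^ 2 * g x ^ 2 ∂μ ≤ ∫ x, f x ^ 2 ∂μ := by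
      refine integral_mono_ae (intg2.const_mul _) intf2 ?_
      filter_upwards [hsand] with x ⟨h1, h2, hg0, hf0⟩
      have : 0 < m * g x := mul_pos hmpos hg0
      nlinarith
    rw [integral_const_mul] at key
    rw [hgnorm, hfnorm] at key
    nlinarith
  have h1M : 1 ≤ M := by
    have key : ∫ x, f x ^ 2 ∂μ ≤ ∫ x, M ^ 2 * g x ^ 2 ∂μ := by
      refine integral_mono_ae intf2 (intg2.const_mul _) ?_
      filter_upwards [hsand] with x ⟨h1, h2, hg0, hf0⟩
      nlinarith
    rw [integral_const_mul] at key
    rw [hgnorm, hfnorm] at key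
    nlinarith
  -- middle inequality
  have hcross : (1 : ℝ) + M * m ≤ (M + m) * ∫ x, f x * g x ∂μ := by
    have key : ∫ x, (f x ^ 2 + M * m * g x ^ 2) ∂μ ≤ ∫ x, (M + m) * (f x * g x) ∂μ := by
      refine integral_mono_ae (intf2.add (intg2.const_mul _)) (intfg.const_mul _) ?_
      filter_upwards [hsand] with x ⟨h1, h2, hg0, hf0⟩
      nlinarith [mul_nonneg (sub_nonneg.2 h2) (sub_nonneg.2 h1)]
    rw [integral_add intf2 (intg2.const_mul _), integral_const_mul, integral_const_mul,
      hfnorm, hgnorm] at key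
    linarith
  have hexpand : ∫ x, (f x - g x) ^ 2 ∂μ = 2 - 2 * ∫ x, f x * g x ∂μ := by
    have : ∀ x, (f x - g x) ^ 2 = f x ^ 2 + g x ^ 2 - 2 * (f x * g x) := by intro x; ring
    simp_rw [this]
    rw [integral_sub (show Integrable (fun x => f x ^ 2 + g x ^ 2) μ from intf2.add intg2)
      (intfg.const_mul _),
      integral_add intf2 intg2, integral_const_mul, hfnorm, hgnorm]
    ring
  have hsq : ∫ x, (f x - g x) ^ 2 ∂μ ≤ (M - m) ^ 2 := by
    rw [hexpand]
    nlinarith [hcross, sq_nonneg (M + m - 2), mul_nonneg (sub_nonneg.2 h1M) (sub_nonneg.2 hm1),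
      mul_nonneg (mul_nonneg (sub_nonneg.2 h1M) (sub_nonneg.2 hm1)) (by linarith : (0:ℝ) ≤ M + m - 1)]
  have hd : hilbertDist μ f g = Real.log (M / m) := rfl
  clear_value M m
  refine ⟨hm1, h1M, ?_, ?_⟩
  · calc Real.sqrt (∫ x in S, (f x - g x) ^ 2) ≤ Real.sqrt ((M - m) ^ 2) :=
        Real.sqrt_le_sqrt hsq
    _ = M - m := by rw [Real.sqrt_sq (by linarith)]
  · rw [hd]
    rw [Real.exp_log (div_pos hMpos hmpos)]
    exact aux_final_arith M m hmpos hm1 hmM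
end
end

section
/- Let S₀, S₁ ⊆ ℝⁿ be compact sets with S₁ of positive Lebesgue measure |S₁|, let q : S₀ × S₁ → ℝ be continuous with q ≥ α > 0, and let h : S₀ → [0, ∞) be integrable with ∫_{S₀} h > 0. Define ψ(x) = ∫_{S₀} q(y,x) h(y) dy for x ∈ S₁ and g = ψ / ‖ψ‖_{L²(S₁)}. Then for all x₁, x₂ ∈ S₁, |g(x₁) − g(x₂)| ≤ (α √|S₁|)^{-1} · sup_{y ∈ S₀} |q(y,x₁) − q(y,x₂)|. In particular, the family of all such normalized functions g (over all admissible h) is uniformly equicontinuous on S₁. -/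
open MeasureTheory

noncomputable section

/-- The `L²(S₁)`-normalization of `ψ(x) = ∫_{S₀} q(y,x) h(y) dy`. -/
def normg {n : ℕ} (S₀ S₁ : Set (EuclideanSpace ℝ (Fin n)))
    (q : EuclideanSpace ℝ (Fin n) → EuclideanSpace ℝ (Fin n) → ℝ)
    (h : EuclideanSpace ℝ (Fin n) → ℝ) (x : EuclideanSpace ℝ (Fin n)) : ℝ :=
  (∫ y in S₀, q y x * h y) /
    Real.sqrt (∫ z in S₁, (∫ y in S₀, q y z * h y) ^ 2)

variable {n : ℕ} {S₀ S₁ : Set (EuclideanSpace ℝ (Fin n))}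
  {q : EuclideanSpace ℝ (Fin n) → EuclideanSpace ℝ (Fin n) → ℝ}

/-- Uniform continuity of `q` on the compact product, in ε-δ form. -/
lemma supQ_small (hS₀ : IsCompact S₀) (hS₁ : IsCompact S₁)
    (hqc : ContinuousOn (fun p : EuclideanSpace ℝ (Fin n) × EuclideanSpace ℝ (Fin n) =>
      q p.1 p.2) (S₀ ×ˢ S₁))
    {ε : ℝ} (hε : 0 < ε) :
    ∃ δ : ℝ, 0 < δ ∧ ∀ x₁ ∈ S₁, ∀ x₂ ∈ S₁, dist x₁ x₂ < δ →
      ∀ y ∈ S₀, |q y x₁ - q y x₂| < ε := by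
  have huc := (hS₀.prod hS₁).uniformContinuousOn_of_continuous hqc
  rw [Metric.uniformContinuousOn_iff] at huc
  obtain ⟨δ, hδ, H⟩ := huc ε hε
  refine ⟨δ, hδ, fun x₁ hx₁ x₂ hx₂ hd y hy => ?_⟩
  have := H (y, x₁) ⟨hy, hx₁⟩ (y, x₂) ⟨hy, hx₂⟩ ?_
  · simpa [Real.dist_eq] using this
  · rw [Prod.dist_eq]
    simp only [dist_self]
    exact max_lt hδ hd

lemma integ_q (hS₀ : IsCompact S₀) (hS₁ : IsCompact S₁)
    (hqc : ContinuousOn (fun p : EuclideanSpace ℝ (Fin n) × EuclideanSpace ℝ (Fin n) =>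
      q p.1 p.2) (S₀ ×ˢ S₁))
    {h : EuclideanSpace ℝ (Fin n) → ℝ} (hh : IntegrableOn h S₀)
    {x : EuclideanSpace ℝ (Fin n)} (hx : x ∈ S₁) :
    IntegrableOn (fun y => q y x * h y) S₀ := by
  have hcont : ContinuousOn (fun y => q y x) S₀ := by
    have : ContinuousOn (fun y : EuclideanSpace ℝ (Fin n) => (y, x)) S₀ :=
      (continuous_id.prodMk continuous_const).continuousOn
    exact hqc.comp this (fun y hy => ⟨hy, hx⟩)
  obtain ⟨C, hC⟩ := hS₀.exists_bound_of_continuousOn hcont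
  refine Integrable.bdd_mul (c := C) hh (hcont.aestronglyMeasurable hS₀.measurableSet) ?_
  filter_upwards [ae_restrict_mem hS₀.measurableSet] with y hy
  exact hC y hy

lemma diff_bound (hS₀ : IsCompact S₀) (hS₁ : IsCompact S₁)
    (hqc : ContinuousOn (fun p : EuclideanSpace ℝ (Fin n) × EuclideanSpace ℝ (Fin n) =>
      q p.1 p.2) (S₀ ×ˢ S₁))
    {h : EuclideanSpace ℝ (Fin n) → ℝ} (hh : IntegrableOn h S₀) (hh0 : ∀ y, 0 ≤ h y)
    {x₁ x₂ : EuclideanSpace ℝ (Fin n)} (hx₁ : x₁ ∈ S₁) (hx₂ : x₂ ∈ S₁)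
    {C : ℝ} (hC : ∀ y ∈ S₀, |q y x₁ - q y x₂| ≤ C) :
    |(∫ y in S₀, q y x₁ * h y) - ∫ y in S₀, q y x₂ * h y| ≤ C * ∫ y in S₀, h y := by
  rw [← integral_sub (integ_q hS₀ hS₁ hqc hh hx₁) (integ_q hS₀ hS₁ hqc hh hx₂)]
  rw [← integral_const_mul]
  calc |∫ y in S₀, (q y x₁ * h y - q y x₂ * h y)|
      = ‖∫ y in S₀, (q y x₁ - q y x₂) * h y‖ := by
        simp only [Real.norm_eq_abs]; congr 1; apply integral_congr_ae
        filter_upwards with y; ring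
    _ ≤ ∫ y in S₀, C * h y := by
        apply norm_integral_le_of_norm_le (hh.const_mul C)
        filter_upwards [ae_restrict_mem hS₀.measurableSet] with y hy
        rw [Real.norm_eq_abs, abs_mul, abs_of_nonneg (hh0 y)]
        exact mul_le_mul_of_nonneg_right (hC y hy) (hh0 y)

lemma key_bound (hS₀ : IsCompact S₀) (hS₁ : IsCompact S₁)
    (hS₁pos : 0 < volume S₁)
    (hqc : ContinuousOn (fun p : EuclideanSpace ℝ (Fin n) × EuclideanSpace ℝ (Fin n) =>
      q p.1 p.2) (S₀ ×ˢ S₁))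
    {α : ℝ} (hα : 0 < α) (hqα : ∀ y ∈ S₀, ∀ x ∈ S₁, α ≤ q y x)
    {h : EuclideanSpace ℝ (Fin n) → ℝ} (hh : IntegrableOn h S₀) (hh0 : ∀ y, 0 ≤ h y)
    (hhpos : 0 < ∫ y in S₀, h y)
    {x₁ x₂ : EuclideanSpace ℝ (Fin n)} (hx₁ : x₁ ∈ S₁) (hx₂ : x₂ ∈ S₁)
    {C : ℝ} (hC : ∀ y ∈ S₀, |q y x₁ - q y x₂| ≤ C) :
    |normg S₀ S₁ q h x₁ - normg S₀ S₁ q h x₂| ≤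
      (α * Real.sqrt (volume S₁).toReal)⁻¹ * C := by
  set I : ℝ := ∫ y in S₀, h y with hI
  set ψ : EuclideanSpace ℝ (Fin n) → ℝ := fun x => ∫ y in S₀, q y x * h y with hψ
  have hm : (0:ℝ) < (volume S₁).toReal :=
    ENNReal.toReal_pos hS₁pos.ne' hS₁.measure_lt_top.ne
  set m : ℝ := (volume S₁).toReal with hmdef
  -- ψ z ≥ α I for z ∈ S₁
  have hψlb : ∀ z ∈ S₁, α * I ≤ ψ z := by
    intro z hz
    rw [hI, ← integral_const_mul]
    apply setIntegral_mono_on (hh.const_mul α) (integ_q hS₀ hS₁ hqc hh hz)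
      hS₀.measurableSet
    intro y hy
    exact mul_le_mul_of_nonneg_right (hqα y hy z hz) (hh0 y)
  -- ψ is continuous on S₁
  have hψc : ContinuousOn ψ S₁ := by
    rw [Metric.continuousOn_iff]
    intro b hb ε hε
    have hε' : 0 < ε / (I + 1) := by positivity
    obtain ⟨δ, hδ, H⟩ := supQ_small hS₀ hS₁ hqc hε'
    refine ⟨δ, hδ, fun a ha hd => ?_⟩
    rw [Real.dist_eq]
    calc |ψ a - ψ b| ≤ (ε / (I + 1)) * I :=
          diff_bound hS₀ hS₁ hqc hh hh0 ha hb (fun y hy => (H a ha b hb hd y hy).le)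
      _ < ε := by
          rw [div_mul_eq_mul_div, div_lt_iff₀ (by positivity)]
          nlinarith
  -- lower bound on the L² norm
  have hψ2 : IntegrableOn (fun z => ψ z ^ 2) S₁ := (hψc.pow 2).integrableOn_compact hS₁
  have hDsq : (α * I) ^ 2 * m ≤ ∫ z in S₁, ψ z ^ 2 := by
    have : ∫ z in S₁, (α * I) ^ 2 = (α * I) ^ 2 * m := by
      rw [setIntegral_const, smul_eq_mul, hmdef]; simp only [Measure.real]; ring
    rw [← this]
    apply setIntegral_mono_on (integrableOn_const hS₁.measure_lt_top.ne)
      hψ2 hS₁.measurableSet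
    intro z hz
    exact pow_le_pow_left₀ (by positivity) (hψlb z hz) 2
  have hD : α * Real.sqrt m * I ≤ Real.sqrt (∫ z in S₁, ψ z ^ 2) := by
    have h1 : α * Real.sqrt m * I = Real.sqrt ((α * I) ^ 2 * m) := by
      rw [Real.sqrt_mul (by positivity), Real.sqrt_sq (by positivity)]
      ring
    rw [h1]
    exact Real.sqrt_le_sqrt hDsq
  have hDpos : 0 < Real.sqrt (∫ z in S₁, ψ z ^ 2) :=
    lt_of_lt_of_le (by positivity) hD
  have hC0 : 0 ≤ C := by
    have hS₀ne : S₀.Nonempty := by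
      by_contra hne
      rw [Set.not_nonempty_iff_eq_empty] at hne
      simp [hI, hne] at hhpos
    obtain ⟨y, hy⟩ := hS₀ne
    exact le_trans (abs_nonneg _) (hC y hy)
  -- combine
  have hdiff : |ψ x₁ - ψ x₂| ≤ C * I := diff_bound hS₀ hS₁ hqc hh hh0 hx₁ hx₂ hC
  have hng : ∀ x, normg S₀ S₁ q h x = ψ x / Real.sqrt (∫ z in S₁, ψ z ^ 2) :=
    fun x => rfl
  rw [hng, hng, div_sub_div_same, abs_div, abs_of_pos hDpos]
  calc |ψ x₁ - ψ x₂| / Real.sqrt (∫ z in S₁, ψ z ^ 2)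
      ≤ (C * I) / (α * Real.sqrt m * I) :=
        div_le_div₀ (by positivity) hdiff (by positivity) hD
    _ = (α * Real.sqrt m)⁻¹ * C := by
        field_simp

/-- a quantitative modulus-of-continuity bound for the normalized
functions `g = ψ/‖ψ‖₂`, and, as a consequence, uniform equicontinuity of the
family of all such `g` over all admissible `h`. -/
theorem normalized_iterates_equicontinuous (n : ℕ)
    (S₀ S₁ : Set (EuclideanSpace ℝ (Fin n)))
    (hS₀ : IsCompact S₀) (hS₁ : IsCompact S₁)
    (hS₁pos : 0 < volume S₁)
    (q : EuclideanSpace ℝ (Fin n) → EuclideanSpace ℝ (Fin n) → ℝ)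
    (hqc : ContinuousOn (fun p : EuclideanSpace ℝ (Fin n) × EuclideanSpace ℝ (Fin n) =>
      q p.1 p.2) (S₀ ×ˢ S₁))
    (α : ℝ) (hα : 0 < α)
    (hqα : ∀ y ∈ S₀, ∀ x ∈ S₁, α ≤ q y x) :
    (∀ h : EuclideanSpace ℝ (Fin n) → ℝ,
      IntegrableOn h S₀ → (∀ y, 0 ≤ h y) → 0 < ∫ y in S₀, h y →
      ∀ x₁ ∈ S₁, ∀ x₂ ∈ S₁,
        |normg S₀ S₁ q h x₁ - normg S₀ S₁ q h x₂| ≤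
          (α * Real.sqrt (volume S₁).toReal)⁻¹ *
            sSup ((fun y => |q y x₁ - q y x₂|) '' S₀)) ∧
    (∀ ε : ℝ, 0 < ε → ∃ δ : ℝ, 0 < δ ∧
      ∀ h : EuclideanSpace ℝ (Fin n) → ℝ,
        IntegrableOn h S₀ → (∀ y, 0 ≤ h y) → 0 < ∫ y in S₀, h y →
        ∀ x₁ ∈ S₁, ∀ x₂ ∈ S₁, dist x₁ x₂ < δ →
          |normg S₀ S₁ q h x₁ - normg S₀ S₁ q h x₂| < ε) := by
  constructor
  · intro h hh hh0 hhpos x₁ hx₁ x₂ hx₂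
    have hcont : ContinuousOn (fun y => |q y x₁ - q y x₂|) S₀ := by
      have c1 : ContinuousOn (fun y => q y x₁) S₀ :=
        hqc.comp ((continuous_id.prodMk continuous_const).continuousOn)
          (fun y hy => ⟨hy, hx₁⟩)
      have c2 : ContinuousOn (fun y => q y x₂) S₀ :=
        hqc.comp ((continuous_id.prodMk continuous_const).continuousOn)
          (fun y hy => ⟨hy, hx₂⟩)
      exact (c1.sub c2).abs
    have hbdd : BddAbove ((fun y => |q y x₁ - q y x₂|) '' S₀) :=
      (hS₀.image_of_continuousOn hcont).bddAbove
    exact key_bound hS₀ hS₁ hS₁pos hqc hα hqα hh hh0 hhpos hx₁ hx₂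
      (fun y hy => le_csSup hbdd ⟨y, hy, rfl⟩)
  · intro ε hε
    have hm : (0:ℝ) < (volume S₁).toReal :=
      ENNReal.toReal_pos hS₁pos.ne' hS₁.measure_lt_top.ne
    have hε' : 0 < ε * (α * Real.sqrt (volume S₁).toReal) / 2 := by positivity
    obtain ⟨δ, hδ, H⟩ := supQ_small hS₀ hS₁ hqc hε'
    refine ⟨δ, hδ, fun h hh hh0 hhpos x₁ hx₁ x₂ hx₂ hd => ?_⟩
    have hb := key_bound hS₀ hS₁ hS₁pos hqc hα hqα hh hh0 hhpos hx₁ hx₂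
      (C := ε * (α * Real.sqrt (volume S₁).toReal) / 2)
      (fun y hy => (H x₁ hx₁ x₂ hx₂ hd y hy).le)
    refine lt_of_le_of_lt hb ?_
    have hne : α * Real.sqrt (volume S₁).toReal ≠ 0 := by positivity
    have heq : (α * Real.sqrt (volume S₁).toReal)⁻¹ *
        (ε * (α * Real.sqrt (volume S₁).toReal) / 2) = ε / 2 := by
      field_simp
    rw [heq]
    linarith
end
end

section
/- Let S₀, S₁ ⊆ ℝⁿ be compact sets of positive Lebesgue measure, let q : S₀ × S₁ → ℝ be continuous and strictly positive, and let ρ₀, ρ₁ be probability densities on S₀, S₁ respectively. Given g ∈ L∞₊(S₁), define φ₁ = ρ₁/g on S₁, φ₀(x₀) = ∫_{S₁} q(x₀,x₁) φ₁(x₁) dx₁ on S₀, φ̂₀ = ρ₀/φ₀ on S₀, and φ̂₁(x₁) = ∫_{S₀} q(x₀,x₁) φ̂₀(x₀) dx₀ on S₁. If there exists λ > 0 with φ̂₁ = λ·g almost everywhere on S₁, then λ = 1. -/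
open MeasureTheory

noncomputable section

set_option maxHeartbeats 2000000 in
/-- if the fixed-point equation `φ̂₁ = λ g` holds for the composed
Schrödinger iteration started at `g`, then necessarily `λ = 1`. -/
theorem fixed_point_eigenvalue_one (n : ℕ)
    (S₀ S₁ : Set (EuclideanSpace ℝ (Fin n)))
    (hS₀ : IsCompact S₀) (hS₁ : IsCompact S₁)
    (hS₀pos : 0 < volume S₀) (hS₁pos : 0 < volume S₁)
    (q : EuclideanSpace ℝ (Fin n) → EuclideanSpace ℝ (Fin n) → ℝ)
    (hqc : ContinuousOn (fun p : EuclideanSpace ℝ (Fin n) × EuclideanSpace ℝ (Fin n) =>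
      q p.1 p.2) (S₀ ×ˢ S₁))
    (hqpos : ∀ x ∈ S₀, ∀ y ∈ S₁, 0 < q x y)
    (ρ₀ ρ₁ : EuclideanSpace ℝ (Fin n) → ℝ)
    (hρ₀m : Measurable ρ₀) (hρ₁m : Measurable ρ₁)
    (hρ₀nn : ∀ x ∈ S₀, 0 ≤ ρ₀ x) (hρ₁nn : ∀ x ∈ S₁, 0 ≤ ρ₁ x)
    (hρ₀int : ∫ x in S₀, ρ₀ x = 1) (hρ₁int : ∫ x in S₁, ρ₁ x = 1)
    (g : EuclideanSpace ℝ (Fin n) → ℝ) (hg : MemLinfPos (volume.restrict S₁) g)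
    -- the chain φ₁ = ρ₁/g, φ₀ = E(φ₁), ψ₀ = ρ₀/φ₀, ψ₁ = E†(ψ₀)
    (φ₁ φ₀ ψ₀ ψ₁ : EuclideanSpace ℝ (Fin n) → ℝ)
    (hφ₁ : ∀ x₁ ∈ S₁, φ₁ x₁ = ρ₁ x₁ / g x₁)
    (hφ₀ : ∀ x₀ ∈ S₀, φ₀ x₀ = ∫ x₁ in S₁, q x₀ x₁ * φ₁ x₁)
    (hψ₀ : ∀ x₀ ∈ S₀, ψ₀ x₀ = ρ₀ x₀ / φ₀ x₀)
    (hψ₁ : ∀ x₁ ∈ S₁, ψ₁ x₁ = ∫ x₀ in S₀, q x₀ x₁ * ψ₀ x₀)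
    (l : ℝ) (hl : 0 < l)
    (hfix : ∀ᵐ x₁ ∂(volume.restrict S₁), ψ₁ x₁ = l * g x₁) :
    l = 1 := by
  classical
  -- basic measurability of the sets
  have hS₀m : MeasurableSet S₀ := hS₀.isClosed.measurableSet
  have hS₁m : MeasurableSet S₁ := hS₁.isClosed.measurableSet
  have hS₀ne : S₀.Nonempty := nonempty_of_measure_ne_zero hS₀pos.ne'
  have hS₁ne : S₁.Nonempty := nonempty_of_measure_ne_zero hS₁pos.ne'
  haveI : IsFiniteMeasure (volume.restrict S₀) :=
    ⟨by simpa [Measure.restrict_apply_univ] using hS₀.measure_lt_top⟩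
  haveI : IsFiniteMeasure (volume.restrict S₁) :=
    ⟨by simpa [Measure.restrict_apply_univ] using hS₁.measure_lt_top⟩
  obtain ⟨gm, c, K, hc, hcK, hgae⟩ := hg
  have hK : (0:ℝ) < K := lt_of_lt_of_le hc hcK
  -- min and max of q on the compact product
  have hSc : IsCompact (S₀ ×ˢ S₁) := hS₀.prod hS₁
  have hScne : (S₀ ×ˢ S₁).Nonempty := hS₀ne.prod hS₁ne
  obtain ⟨pm, hpm, hmin⟩ := hSc.exists_isMinOn hScne hqc
  obtain ⟨pM, hpM, hmax⟩ := hSc.exists_isMaxOn hScne hqc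
  set ε : ℝ := q pm.1 pm.2 with hεdef
  set M : ℝ := q pM.1 pM.2 with hMdef
  have hε : 0 < ε := hqpos _ hpm.1 _ hpm.2
  have hεle : ∀ x ∈ S₀, ∀ y ∈ S₁, ε ≤ q x y := fun x hx y hy =>
    hmin (Set.mk_mem_prod hx hy)
  have hMle : ∀ x ∈ S₀, ∀ y ∈ S₁, q x y ≤ M := fun x hx y hy =>
    hmax (Set.mk_mem_prod hx hy)
  have hM : 0 < M := hqpos _ hpM.1 _ hpM.2
  -- integrability of the densities
  have hρ₁I : IntegrableOn ρ₁ S₁ := by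
    by_contra h
    rw [MeasureTheory.integral_undef h] at hρ₁int
    norm_num at hρ₁int
  have hρ₀I : IntegrableOn ρ₀ S₀ := by
    by_contra h
    rw [MeasureTheory.integral_undef h] at hρ₀int
    norm_num at hρ₀int
  -- the function f₁ = ρ₁ / g
  set f₁ : EuclideanSpace ℝ (Fin n) → ℝ := fun x => ρ₁ x / g x with hf₁def
  have hρ₁nn' : ∀ᵐ x ∂(volume.restrict S₁), 0 ≤ ρ₁ x := by
    filter_upwards [ae_restrict_mem hS₁m] with x hx using hρ₁nn x hx
  have hf₁sm : AEStronglyMeasurable f₁ (volume.restrict S₁) :=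
    (hρ₁m.aemeasurable.div gm.aemeasurable).aestronglyMeasurable
  have hf₁bd : ∀ᵐ x ∂(volume.restrict S₁), 0 ≤ f₁ x ∧ f₁ x ≤ ρ₁ x / c := by
    filter_upwards [hgae, hρ₁nn'] with x hgx hρx
    constructor
    · exact div_nonneg hρx (le_of_lt (lt_of_lt_of_le hc hgx.1))
    · exact div_le_div_of_nonneg_left hρx hc hgx.1
  have hf₁I : IntegrableOn f₁ S₁ := by
    refine Integrable.mono' (hρ₁I.div_const c) hf₁sm ?_
    filter_upwards [hf₁bd] with x hx
    rw [Real.norm_eq_abs, abs_of_nonneg hx.1]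
    exact hx.2
  -- lower bound for ∫ f₁
  have hL1 : 1 / K ≤ ∫ x in S₁, f₁ x := by
    have h1 : ∫ x in S₁, ρ₁ x / K ≤ ∫ x in S₁, f₁ x := by
      refine integral_mono_ae (hρ₁I.div_const K) hf₁I ?_
      filter_upwards [hgae, hρ₁nn'] with x hgx hρx
      exact div_le_div_of_nonneg_left hρx (lt_of_lt_of_le hc hgx.1) hgx.2
    calc (1:ℝ) / K = ∫ x in S₁, ρ₁ x / K := by rw [integral_div, hρ₁int]
    _ ≤ _ := h1
  -- integrability of x₁ ↦ q x₀ x₁ * f₁ x₁ for each x₀ ∈ S₀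
  have hqx₀ : ∀ x₀ ∈ S₀, ContinuousOn (fun y => q x₀ y) S₁ := by
    intro x₀ hx₀
    have : ContinuousOn ((fun p : EuclideanSpace ℝ (Fin n) × EuclideanSpace ℝ (Fin n) =>
        q p.1 p.2) ∘ (fun y => (x₀, y))) S₁ := by
      refine hqc.comp ((continuous_const.prodMk continuous_id).continuousOn) ?_
      intro y hy
      exact ⟨hx₀, hy⟩
    exact this
  have hqf₁I : ∀ x₀ ∈ S₀, IntegrableOn (fun x₁ => q x₀ x₁ * f₁ x₁) S₁ := by
    intro x₀ hx₀
    refine Integrable.mono' (((hρ₁I.div_const c).const_mul M)) ?_ ?_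
    · exact (((hqx₀ x₀ hx₀).aemeasurable hS₁m).mul
        (hρ₁m.aemeasurable.div gm.aemeasurable)).aestronglyMeasurable
    · filter_upwards [hf₁bd, ae_restrict_mem hS₁m] with x hx hxS
      have hq0 : 0 ≤ q x₀ x := le_of_lt (hqpos _ hx₀ _ hxS)
      rw [Real.norm_eq_abs, abs_of_nonneg (mul_nonneg hq0 hx.1)]
      exact mul_le_mul (hMle _ hx₀ _ hxS) hx.2 hx.1 (le_of_lt hM)
  -- lower bound for φ₀ on S₀
  set a : ℝ := ε / K with hadef
  have ha : 0 < a := div_pos hε hK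
  have hφ₀eq : ∀ x₀ ∈ S₀, φ₀ x₀ = ∫ x₁ in S₁, q x₀ x₁ * f₁ x₁ := by
    intro x₀ hx₀
    rw [hφ₀ x₀ hx₀]
    refine setIntegral_congr_fun hS₁m (fun x hx => ?_)
    rw [hφ₁ x hx]
  have hφ₀lb : ∀ x₀ ∈ S₀, a ≤ φ₀ x₀ := by
    intro x₀ hx₀
    rw [hφ₀eq x₀ hx₀]
    have h1 : ∫ x in S₁, ε * f₁ x ≤ ∫ x in S₁, q x₀ x * f₁ x := by
      refine integral_mono_ae (hf₁I.const_mul ε) (hqf₁I x₀ hx₀) ?_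
      filter_upwards [hf₁bd, ae_restrict_mem hS₁m] with x hx hxS
      exact mul_le_mul_of_nonneg_right (hεle _ hx₀ _ hxS) hx.1
    have h2 : a ≤ ∫ x in S₁, ε * f₁ x := by
      rw [integral_const_mul]
      calc a = ε * (1 / K) := by rw [hadef]; ring
      _ ≤ ε * ∫ x in S₁, f₁ x := by
          exact mul_le_mul_of_nonneg_left hL1 (le_of_lt hε)
    exact le_trans h2 h1
  have hφ₀pos : ∀ x₀ ∈ S₀, 0 < φ₀ x₀ := fun x₀ hx₀ => lt_of_lt_of_le ha (hφ₀lb x₀ hx₀)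
  -- ψ₀ bounds
  have hρ₀nn' : ∀ᵐ x ∂(volume.restrict S₀), 0 ≤ ρ₀ x := by
    filter_upwards [ae_restrict_mem hS₀m] with x hx using hρ₀nn x hx
  have hψ₀bd : ∀ x₀ ∈ S₀, 0 ≤ ψ₀ x₀ ∧ ψ₀ x₀ ≤ ρ₀ x₀ / a := by
    intro x₀ hx₀
    rw [hψ₀ x₀ hx₀]
    constructor
    · exact div_nonneg (hρ₀nn x₀ hx₀) (le_of_lt (hφ₀pos x₀ hx₀))
    · exact div_le_div_of_nonneg_left (hρ₀nn x₀ hx₀) ha (hφ₀lb x₀ hx₀)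
  -- measurability of ψ₀ on S₀
  have hqprod : AEStronglyMeasurable
      (fun p : EuclideanSpace ℝ (Fin n) × EuclideanSpace ℝ (Fin n) => q p.1 p.2)
      ((volume.restrict S₀).prod (volume.restrict S₁)) := by
    rw [Measure.prod_restrict]
    exact (hqc.aemeasurable (hS₀m.prod hS₁m)).aestronglyMeasurable
  have hFsm : AEStronglyMeasurable
      (fun p : EuclideanSpace ℝ (Fin n) × EuclideanSpace ℝ (Fin n) => q p.1 p.2 * f₁ p.2)
      ((volume.restrict S₀).prod (volume.restrict S₁)) :=
    hqprod.mul hf₁sm.comp_snd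
  have hΦsm : AEStronglyMeasurable (fun x₀ => ∫ x₁ in S₁, q x₀ x₁ * f₁ x₁)
      (volume.restrict S₀) := hFsm.integral_prod_right'
  have hψ₀sm : AEStronglyMeasurable ψ₀ (volume.restrict S₀) := by
    have : ψ₀ =ᵐ[volume.restrict S₀]
        fun x₀ => ρ₀ x₀ / ∫ x₁ in S₁, q x₀ x₁ * f₁ x₁ := by
      filter_upwards [ae_restrict_mem hS₀m] with x hx
      rw [hψ₀ x hx, hφ₀eq x hx]
    exact AEStronglyMeasurable.congr
      (hρ₀m.aemeasurable.div hΦsm.aemeasurable).aestronglyMeasurable this.symm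
  have hψ₀I : IntegrableOn ψ₀ S₀ := by
    refine Integrable.mono' (hρ₀I.div_const a) hψ₀sm ?_
    filter_upwards [ae_restrict_mem hS₀m] with x hx
    rw [Real.norm_eq_abs, abs_of_nonneg (hψ₀bd x hx).1]
    exact (hψ₀bd x hx).2
  -- the key integrand on the product space
  set H : EuclideanSpace ℝ (Fin n) × EuclideanSpace ℝ (Fin n) → ℝ :=
    fun p => q p.1 p.2 * ψ₀ p.1 * f₁ p.2 with hHdef
  have hHsm : AEStronglyMeasurable H ((volume.restrict S₀).prod (volume.restrict S₁)) :=
    (hqprod.mul hψ₀sm.comp_fst).mul hf₁sm.comp_snd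
  have haemem : ∀ᵐ p ∂((volume.restrict S₀).prod (volume.restrict S₁)), p ∈ S₀ ×ˢ S₁ := by
    rw [Measure.prod_restrict]
    exact ae_restrict_mem (hS₀m.prod hS₁m)
  have hf₁bd2 : ∀ᵐ p ∂((volume.restrict S₀).prod (volume.restrict S₁)),
      0 ≤ f₁ p.2 ∧ f₁ p.2 ≤ ρ₁ p.2 / c :=
    (MeasureTheory.Measure.quasiMeasurePreserving_snd).ae hf₁bd
  have hHI : Integrable H ((volume.restrict S₀).prod (volume.restrict S₁)) := by
    have hBI : Integrable (fun p : EuclideanSpace ℝ (Fin n) × EuclideanSpace ℝ (Fin n) =>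
        (M * (ρ₀ p.1 / a)) * (ρ₁ p.2 / c)) ((volume.restrict S₀).prod (volume.restrict S₁)) :=
      Integrable.mul_prod ((hρ₀I.div_const a).const_mul M) (hρ₁I.div_const c)
    refine Integrable.mono' hBI hHsm ?_
    filter_upwards [haemem, hf₁bd2] with p hp hf
    obtain ⟨hp0, hp1⟩ := hp
    have hq0 : 0 ≤ q p.1 p.2 := le_of_lt (hqpos _ hp0 _ hp1)
    have hψnn := (hψ₀bd _ hp0).1
    rw [Real.norm_eq_abs, abs_of_nonneg (mul_nonneg (mul_nonneg hq0 hψnn) hf.1)]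
    have h1 : q p.1 p.2 * ψ₀ p.1 ≤ M * (ρ₀ p.1 / a) :=
      mul_le_mul (hMle _ hp0 _ hp1) (hψ₀bd _ hp0).2 hψnn (le_of_lt hM)
    exact mul_le_mul h1 hf.2 hf.1
      (mul_nonneg (le_of_lt hM) (div_nonneg (hρ₀nn _ hp0) (le_of_lt ha)))
  -- Step 1 : ∫ ψ₁ f₁ over S₁ equals l
  have step1 : ∫ x₁ in S₁, ψ₁ x₁ * f₁ x₁ = l := by
    have heq : (fun x₁ => ψ₁ x₁ * f₁ x₁) =ᵐ[volume.restrict S₁] fun x₁ => l * ρ₁ x₁ := by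
      filter_upwards [hfix, hgae] with x hx hgx
      have hg0 : g x ≠ 0 := ne_of_gt (lt_of_lt_of_le hc hgx.1)
      rw [hx, hf₁def]
      field_simp
    rw [integral_congr_ae heq, integral_const_mul, hρ₁int, mul_one]
  -- Step 2 : the same integral equals 1 via Fubini
  have step2 : ∫ x₁ in S₁, ψ₁ x₁ * f₁ x₁ = 1 := by
    have e1 : ∫ x₁ in S₁, ψ₁ x₁ * f₁ x₁
        = ∫ x₁ in S₁, (∫ x₀ in S₀, q x₀ x₁ * ψ₀ x₀) * f₁ x₁ := by
      refine setIntegral_congr_fun hS₁m (fun x hx => ?_)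
      rw [hψ₁ x hx]
    have e2 : ∀ x₁, (∫ x₀ in S₀, q x₀ x₁ * ψ₀ x₀) * f₁ x₁
        = ∫ x₀ in S₀, q x₀ x₁ * ψ₀ x₀ * f₁ x₁ := by
      intro x₁
      rw [← integral_mul_const]
    have e3 : ∫ x₁ in S₁, ∫ x₀ in S₀, q x₀ x₁ * ψ₀ x₀ * f₁ x₁
        = ∫ x₀ in S₀, ∫ x₁ in S₁, q x₀ x₁ * ψ₀ x₀ * f₁ x₁ :=
      (integral_integral_swap hHI).symm
    have e4 : ∫ x₀ in S₀, ∫ x₁ in S₁, q x₀ x₁ * ψ₀ x₀ * f₁ x₁ = ∫ x₀ in S₀, ρ₀ x₀ := by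
      refine setIntegral_congr_fun hS₀m (fun x₀ hx₀ => ?_)
      have : ∫ x₁ in S₁, q x₀ x₁ * ψ₀ x₀ * f₁ x₁
          = ψ₀ x₀ * ∫ x₁ in S₁, q x₀ x₁ * f₁ x₁ := by
        rw [← integral_const_mul]
        congr 1
        ext x₁
        ring
      rw [this, ← hφ₀eq x₀ hx₀, hψ₀ x₀ hx₀,
        div_mul_cancel₀ _ (ne_of_gt (hφ₀pos x₀ hx₀))]
    rw [e1]
    simp_rw [e2]
    rw [e3, e4, hρ₀int]
  rw [← step1, step2]
end
end

section
/- Let μ₀ and μ₁ be absolutely continuous probability measures on the Borel σ-field of ℝⁿ, and let q : ℝⁿ × ℝⁿ → ℝ be an everywhere continuous, strictly positive function. Suppose (π, ν) and (π', ν') are two pairs of measures on the Borel σ-field of ℝⁿ × ℝⁿ, each satisfying: (1) π is a probability measure and ν is a σ-finite product measure (ν = ν₀ × ν₁ with ν₀, ν₁ σ-finite Borel measures on ℝⁿ), and likewise for (π', ν'); (2) π(E × ℝⁿ) = μ₀(E) and π(ℝⁿ × E) = μ₁(E) for every Borel E ⊆ ℝⁿ, and likewise for π'; (3) dπ/dν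 = q and dπ'/dν' = q. Then π = π' and ν = ν'. -/
open MeasureTheory

noncomputable section

/-- The three defining properties of the pair `(π, ν)` in Jamison's theorem on
`ℝⁿ`: `π` is a probability measure, `ν` is a σ-finite product measure, `π` has
marginals `μ₀, μ₁`, and `dπ/dν = q`. -/
def JamisonPair {n : ℕ} (μ₀ μ₁ : Measure (EuclideanSpace ℝ (Fin n)))
    (q : EuclideanSpace ℝ (Fin n) → EuclideanSpace ℝ (Fin n) → ℝ)
    (π ν : Measure (EuclideanSpace ℝ (Fin n) × EuclideanSpace ℝ (Fin n))) : Prop :=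
  IsProbabilityMeasure π ∧
  (∃ ν₀ ν₁ : Measure (EuclideanSpace ℝ (Fin n)),
    SigmaFinite ν₀ ∧ SigmaFinite ν₁ ∧ ν = ν₀.prod ν₁) ∧
  (∀ E : Set (EuclideanSpace ℝ (Fin n)), MeasurableSet E →
    π (E ×ˢ (Set.univ : Set (EuclideanSpace ℝ (Fin n)))) = μ₀ E) ∧
  (∀ E : Set (EuclideanSpace ℝ (Fin n)), MeasurableSet E →
    π ((Set.univ : Set (EuclideanSpace ℝ (Fin n))) ×ˢ E) = μ₁ E) ∧
  π = ν.withDensity (fun p => ENNReal.ofReal (q p.1 p.2))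

open Filter Set
open scoped ENNReal NNReal

namespace JamisonAux


def clamp (c t : ℝ) : ℝ := max (-c) (min t c)

lemma clamp_mono (c : ℝ) : Monotone (clamp c) := fun _ _ h =>
  max_le_max le_rfl (min_le_min h le_rfl)

lemma clamp_neg {c : ℝ} (hc : 0 ≤ c) (t : ℝ) : clamp c (-t) = -clamp c t := by
  unfold clamp
  rcases le_total t c with h1 | h1 <;> rcases le_total (-c) t with h2 | h2 <;>
    simp [max_def, min_def] <;> split_ifs <;> linarith

lemma clamp_abs_le {c : ℝ} (hc : 0 ≤ c) (t : ℝ) : |clamp c t| ≤ c := by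
  unfold clamp
  rw [abs_le]
  exact ⟨le_max_left _ _, max_le (by linarith) (min_le_right _ _)⟩

lemma clamp_eq_self {c t : ℝ} (h1 : -c ≤ t) (h2 : t ≤ c) : clamp c t = t := by
  unfold clamp
  rw [min_eq_left h2, max_eq_right h1]

lemma clamp_continuous (c : ℝ) : Continuous (clamp c) :=
  continuous_const.max (continuous_id.min continuous_const)

lemma key_ineq {c : ℝ} (hc : 0 ≤ c) (u v : ℝ) :
    0 ≤ (Real.exp (u + v) - 1) * (clamp c u + clamp c v) := by
  rcases le_total 0 (u + v) with h | h
  · refine mul_nonneg (by simpa using Real.one_le_exp h) ?_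
    have : clamp c (-v) ≤ clamp c u := clamp_mono c (by linarith)
    rw [clamp_neg hc] at this
    linarith
  · have h1 : Real.exp (u + v) - 1 ≤ 0 := by simpa using Real.exp_le_one_iff.mpr h
    have h2 : clamp c u ≤ clamp c (-v) := clamp_mono c (by linarith)
    rw [clamp_neg hc] at h2
    nlinarith

/-- Core lemma: a product-form density with the same marginals is a.e. 1. -/
lemma core {X Y : Type*} [MeasurableSpace X] [MeasurableSpace Y]
    (π : Measure (X × Y)) [IsProbabilityMeasure π]
    (A : X → ℝ≥0∞) (B : Y → ℝ≥0∞) (hA : Measurable A) (hB : Measurable B)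
    (hgood : ∀ᵐ p ∂π, (0 < A p.1 ∧ A p.1 < ⊤) ∧ (0 < B p.2 ∧ B p.2 < ⊤))
    (hprob : IsProbabilityMeasure (π.withDensity (fun p => A p.1 * B p.2)))
    (hm0 : (π.withDensity (fun p => A p.1 * B p.2)).map Prod.fst = π.map Prod.fst)
    (hm1 : (π.withDensity (fun p => A p.1 * B p.2)).map Prod.snd = π.map Prod.snd) :
    π.withDensity (fun p => A p.1 * B p.2) = π := by
  set H : X × Y → ℝ≥0∞ := fun p => A p.1 * B p.2 with hHdef
  have hHm : Measurable H := (hA.comp measurable_fst).mul (hB.comp measurable_snd)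
  set π' : Measure (X × Y) := π.withDensity H with hπ'def
  -- total mass of H
  have hHint1 : ∫⁻ p, H p ∂π = 1 := by
    have := measure_univ (μ := π')
    rwa [hπ'def, withDensity_apply _ MeasurableSet.univ, setLIntegral_univ] at this
  have hHtoReal_int : Integrable (fun p => (H p).toReal) π :=
    integrable_toReal_of_lintegral_ne_top hHm.aemeasurable (by rw [hHint1]; exact ENNReal.one_ne_top)
  -- log functions
  set u : X → ℝ := fun x => Real.log (A x).toReal with hudef
  set v : Y → ℝ := fun y => Real.log (B y).toReal with hvdef
  have hum : Measurable u := Real.measurable_log.comp hA.ennreal_toReal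
  have hvm : Measurable v := Real.measurable_log.comp hB.ennreal_toReal
  -- rewrite π' with an ℝ≥0 density
  have hHfin : ∀ᵐ p ∂π, H p < ⊤ := by
    filter_upwards [hgood] with p hp
    exact ENNReal.mul_lt_top hp.1.2 hp.2.2
  have hπ'nn : π' = π.withDensity (fun p => ((H p).toNNReal : ℝ≥0∞)) := by
    rw [hπ'def]
    refine withDensity_congr_ae ?_
    filter_upwards [hHfin] with p hp
    rw [ENNReal.coe_toNNReal hp.ne]
  -- the main step: for every truncation level c, the function vanishes a.e.
  have main : ∀ c : ℕ, ∀ᵐ p ∂π,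
      ((H p).toReal - 1) * (clamp c (u p.1) + clamp c (v p.2)) = 0 := by
    intro c
    set G : X × Y → ℝ := fun p => clamp c (u p.1) + clamp c (v p.2) with hGdef
    have hGm : Measurable G :=
      ((clamp_continuous c).measurable.comp (hum.comp measurable_fst)).add
        ((clamp_continuous c).measurable.comp (hvm.comp measurable_snd))
    have hGbdd : ∀ p, ‖G p‖ ≤ 2 * c := by
      intro p
      have h1 := clamp_abs_le (c := c) (Nat.cast_nonneg c) (u p.1)
      have h2 := clamp_abs_le (c := c) (Nat.cast_nonneg c) (v p.2)
      calc ‖G p‖ ≤ |clamp c (u p.1)| + |clamp c (v p.2)| := abs_add_le _ _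
        _ ≤ 2 * c := by linarith
    -- integrability of G under any finite measure
    have hGint : ∀ (μ : Measure (X × Y)), IsFiniteMeasure μ → Integrable G μ := by
      intro μ hμ
      exact (integrable_const ((2:ℝ) * c)).mono' hGm.aestronglyMeasurable
        (Eventually.of_forall hGbdd)
    -- ∫ G dπ' = ∫ G dπ  (equal marginals)
    haveI : IsProbabilityMeasure π' := hprob
    have hclampum : Measurable (fun x => clamp c (u x)) :=
      (clamp_continuous c).measurable.comp hum
    have hclampvm : Measurable (fun y => clamp c (v y)) :=
      (clamp_continuous c).measurable.comp hvm
    have hint1 : ∀ (μ : Measure (X × Y)), IsFiniteMeasure μ →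
        Integrable (fun p => clamp c (u p.1)) μ := by
      intro μ hμ
      refine (integrable_const ((c:ℝ))).mono'
        ((hclampum.comp measurable_fst).aestronglyMeasurable)
        (Eventually.of_forall fun p => ?_)
      simpa using clamp_abs_le (Nat.cast_nonneg c) (u p.1)
    have hint2 : ∀ (μ : Measure (X × Y)), IsFiniteMeasure μ →
        Integrable (fun p => clamp c (v p.2)) μ := by
      intro μ hμ
      refine (integrable_const ((c:ℝ))).mono'
        ((hclampvm.comp measurable_snd).aestronglyMeasurable)
        (Eventually.of_forall fun p => ?_)
      simpa using clamp_abs_le (Nat.cast_nonneg c) (v p.2)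
    have hsame : ∫ p, G p ∂π' = ∫ p, G p ∂π := by
      have hfst : ∫ p, clamp c (u p.1) ∂π' = ∫ p, clamp c (u p.1) ∂π := by
        calc ∫ p, clamp c (u p.1) ∂π'
            = ∫ x, clamp c (u x) ∂(π'.map Prod.fst) :=
              (integral_map measurable_fst.aemeasurable
                hclampum.aestronglyMeasurable).symm
          _ = ∫ x, clamp c (u x) ∂(π.map Prod.fst) := by rw [hm0]
          _ = ∫ p, clamp c (u p.1) ∂π :=
              integral_map measurable_fst.aemeasurable hclampum.aestronglyMeasurable
      have hsnd : ∫ p, clamp c (v p.2) ∂π' = ∫ p, clamp c (v p.2) ∂π := by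
        calc ∫ p, clamp c (v p.2) ∂π'
            = ∫ y, clamp c (v y) ∂(π'.map Prod.snd) :=
              (integral_map measurable_snd.aemeasurable
                hclampvm.aestronglyMeasurable).symm
          _ = ∫ y, clamp c (v y) ∂(π.map Prod.snd) := by rw [hm1]
          _ = ∫ p, clamp c (v p.2) ∂π :=
              integral_map measurable_snd.aemeasurable hclampvm.aestronglyMeasurable
      rw [hGdef]
      rw [integral_add (hint1 π' inferInstance) (hint2 π' inferInstance),
          integral_add (hint1 π inferInstance) (hint2 π inferInstance), hfst, hsnd]
    -- ∫ G dπ' = ∫ H.toReal * G dπ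
    have hwd : ∫ p, G p ∂π' = ∫ p, (H p).toReal * G p ∂π := by
      rw [hπ'nn, integral_withDensity_eq_integral_smul hHm.ennreal_toNNReal G]
      rfl
    -- the function F
    set F : X × Y → ℝ := fun p => ((H p).toReal - 1) * G p with hFdef
    have hFint : Integrable F π := by
      have h1 : Integrable (fun p => (H p).toReal * G p) π := by
        have := hHtoReal_int.bdd_mul hGm.aestronglyMeasurable (c := 2 * c) (Eventually.of_forall hGbdd)
        simpa [mul_comm] using this
      have h2 := h1.sub (hGint π inferInstance)
      refine h2.congr (Eventually.of_forall fun p => ?_)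
      simp [hFdef]
      ring
    have hFzero : ∫ p, F p ∂π = 0 := by
      have : ∫ p, F p ∂π
          = ∫ p, (H p).toReal * G p ∂π - ∫ p, G p ∂π := by
        rw [← integral_sub] ; · congr 1 with p; simp [hFdef]; ring
        · have := hHtoReal_int.bdd_mul hGm.aestronglyMeasurable (c := 2 * c) (Eventually.of_forall hGbdd)
          simpa [mul_comm] using this
        · exact hGint π inferInstance
      rw [this, ← hwd, hsame, sub_self]
    have hFnonneg : 0 ≤ᵐ[π] F := by
      filter_upwards [hgood] with p hp
      have hA1 : (A p.1).toReal > 0 := ENNReal.toReal_pos hp.1.1.ne' hp.1.2.ne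
      have hB1 : (B p.2).toReal > 0 := ENNReal.toReal_pos hp.2.1.ne' hp.2.2.ne
      have hH : (H p).toReal = Real.exp (u p.1 + v p.2) := by
        rw [hHdef]
        simp only []
        rw [ENNReal.toReal_mul, Real.exp_add, hudef, hvdef]
        simp only []
        rw [Real.exp_log hA1, Real.exp_log hB1]
      show 0 ≤ F p
      rw [hFdef]
      simp only []
      rw [hH]
      exact key_ineq (Nat.cast_nonneg c) _ _
    have := (integral_eq_zero_iff_of_nonneg_ae hFnonneg hFint).mp hFzero
    filter_upwards [this] with p hp
    exact hp
  -- combine over all c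
  rw [hπ'def] at *
  have hae : ∀ᵐ p ∂π, H p = 1 := by
    rw [← ae_all_iff] at main
    filter_upwards [main, hgood] with p hp hg
    have hA1 : (A p.1).toReal > 0 := ENNReal.toReal_pos hg.1.1.ne' hg.1.2.ne
    have hB1 : (B p.2).toReal > 0 := ENNReal.toReal_pos hg.2.1.ne' hg.2.2.ne
    have hH : (H p).toReal = Real.exp (u p.1 + v p.2) := by
      rw [hHdef]
      simp only []
      rw [ENNReal.toReal_mul, Real.exp_add, hudef, hvdef]
      simp only []
      rw [Real.exp_log hA1, Real.exp_log hB1]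
    obtain ⟨c, hc⟩ := exists_nat_ge (max |u p.1| |v p.2|)
    have hcu : |u p.1| ≤ c := le_trans (le_max_left _ _) hc
    have hcv : |v p.2| ≤ c := le_trans (le_max_right _ _) hc
    have h0 := hp c
    rw [clamp_eq_self (neg_le_of_abs_le hcu) (le_of_abs_le hcu),
        clamp_eq_self (neg_le_of_abs_le hcv) (le_of_abs_le hcv), hH] at h0
    rcases mul_eq_zero.mp h0 with h1 | h1
    · have : Real.exp (u p.1 + v p.2) = 1 := by linarith
      rw [← hH, ENNReal.toReal_eq_one_iff] at this
      exact this
    · have hsum : u p.1 + v p.2 = 0 := by linarith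
      have : (H p).toReal = 1 := by rw [hH, hsum, Real.exp_zero]
      rwa [ENNReal.toReal_eq_one_iff] at this
  calc π.withDensity H = π.withDensity 1 := withDensity_congr_ae hae
    _ = π := withDensity_one


lemma ae_fst_of_ae {X Y : Type*} [MeasurableSpace X] [MeasurableSpace Y]
    (ν₀ : Measure X) (ν₁ : Measure Y) [SFinite ν₀] [SFinite ν₁]
    {P : X → Prop} (h : ∀ᵐ x ∂ν₀, P x) : ∀ᵐ p ∂(ν₀.prod ν₁), P p.1 := by
  rw [ae_iff] at h ⊢
  have he : {p : X × Y | ¬ P p.1} = {x | ¬ P x} ×ˢ (univ : Set Y) := by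
    ext p; simp
  rw [he, Measure.prod_prod, h, zero_mul]

lemma ae_snd_of_ae {X Y : Type*} [MeasurableSpace X] [MeasurableSpace Y]
    (ν₀ : Measure X) (ν₁ : Measure Y) [SFinite ν₀] [SFinite ν₁]
    {P : Y → Prop} (h : ∀ᵐ y ∂ν₁, P y) : ∀ᵐ p ∂(ν₀.prod ν₁), P p.2 := by
  rw [ae_iff] at h ⊢
  have he : {p : X × Y | ¬ P p.2} = (univ : Set X) ×ˢ {y | ¬ P y} := by
    ext p; simp
  rw [he, Measure.prod_prod, h, mul_zero]

lemma marg_fst {X Y : Type*} [MeasurableSpace X] [MeasurableSpace Y]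
    (ν₀ : Measure X) (ν₁ : Measure Y) [SFinite ν₀] [SFinite ν₁]
    (Q : X × Y → ℝ≥0∞) (hQ : Measurable Q) (hQpos : ∀ p, Q p ≠ 0)
    (μ₀ : Measure X) (hν₁ : ν₁ ≠ 0)
    (hm : ∀ E : Set X, MeasurableSet E →
      ((ν₀.prod ν₁).withDensity Q) (E ×ˢ (univ : Set Y)) = μ₀ E) :
    μ₀ ≪ ν₀ ∧ ν₀ ≪ μ₀ := by
  constructor
  · refine Measure.AbsolutelyContinuous.mk (fun E hE h0 => ?_)
    rw [← hm E hE]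
    refine (withDensity_absolutelyContinuous _ _) ?_
    rw [Measure.prod_prod, h0, zero_mul]
  · refine Measure.AbsolutelyContinuous.mk (fun E hE h0 => ?_)
    have h1 : ((ν₀.prod ν₁).withDensity Q) (E ×ˢ (univ : Set Y)) = 0 := by
      rw [hm E hE]; exact h0
    rw [withDensity_apply _ (hE.prod MeasurableSet.univ),
      setLIntegral_eq_zero_iff (hE.prod MeasurableSet.univ) hQ] at h1
    have h2 : ∀ᵐ p ∂(ν₀.prod ν₁), p ∉ E ×ˢ (univ : Set Y) := by
      filter_upwards [h1] with p hp hmem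
      exact hQpos p (hp hmem)
    have h3 : ν₀.prod ν₁ (E ×ˢ (univ : Set Y)) = 0 :=
      measure_eq_zero_iff_ae_notMem.mpr h2
    rw [Measure.prod_prod] at h3
    rcases mul_eq_zero.mp h3 with h | h
    · exact h
    · exact absurd (Measure.measure_univ_eq_zero.mp h) hν₁

lemma marg_snd {X Y : Type*} [MeasurableSpace X] [MeasurableSpace Y]
    (ν₀ : Measure X) (ν₁ : Measure Y) [SFinite ν₀] [SFinite ν₁]
    (Q : X × Y → ℝ≥0∞) (hQ : Measurable Q) (hQpos : ∀ p, Q p ≠ 0)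
    (μ₁ : Measure Y) (hν₀ : ν₀ ≠ 0)
    (hm : ∀ E : Set Y, MeasurableSet E →
      ((ν₀.prod ν₁).withDensity Q) ((univ : Set X) ×ˢ E) = μ₁ E) :
    μ₁ ≪ ν₁ ∧ ν₁ ≪ μ₁ := by
  constructor
  · refine Measure.AbsolutelyContinuous.mk (fun E hE h0 => ?_)
    rw [← hm E hE]
    refine (withDensity_absolutelyContinuous _ _) ?_
    rw [Measure.prod_prod, h0, mul_zero]
  · refine Measure.AbsolutelyContinuous.mk (fun E hE h0 => ?_)
    have h1 : ((ν₀.prod ν₁).withDensity Q) ((univ : Set X) ×ˢ E) = 0 := by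
      rw [hm E hE]; exact h0
    rw [withDensity_apply _ (MeasurableSet.univ.prod hE),
      setLIntegral_eq_zero_iff (MeasurableSet.univ.prod hE) hQ] at h1
    have h2 : ∀ᵐ p ∂(ν₀.prod ν₁), p ∉ (univ : Set X) ×ˢ E := by
      filter_upwards [h1] with p hp hmem
      exact hQpos p (hp hmem)
    have h3 : ν₀.prod ν₁ ((univ : Set X) ×ˢ E) = 0 :=
      measure_eq_zero_iff_ae_notMem.mpr h2
    rw [Measure.prod_prod] at h3
    rcases mul_eq_zero.mp h3 with h | h
    · exact absurd (Measure.measure_univ_eq_zero.mp h) hν₀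
    · exact h

lemma prod_withDensity_eq {X Y : Type*} [MeasurableSpace X] [MeasurableSpace Y]
    {ν₀ : Measure X} {ν₁ : Measure Y} [SigmaFinite ν₀] [SigmaFinite ν₁]
    {μ : Measure X} {μ' : Measure Y} [SigmaFinite μ] [SigmaFinite μ']
    {A : X → ℝ≥0∞} {B : Y → ℝ≥0∞} (hA : Measurable A) (hB : Measurable B)
    (h0 : ν₀.withDensity A = μ) (h1 : ν₁.withDensity B = μ') :
    μ.prod μ' = (ν₀.prod ν₁).withDensity (fun p => A p.1 * B p.2) := by
  refine Measure.prod_eq fun s t hs ht => ?_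
  rw [withDensity_apply _ (hs.prod ht), ← Measure.prod_restrict,
    lintegral_prod_mul hA.aemeasurable hB.aemeasurable,
    ← withDensity_apply _ hs, ← withDensity_apply _ ht, h0, h1]

end JamisonAux

/-- uniqueness of the pair `(π, ν)` with `dπ/dν = q` and
prescribed absolutely continuous marginals on `ℝⁿ` (Jamison's theorem,
uniqueness part). -/
theorem jamison_unique (n : ℕ)
    (μ₀ μ₁ : Measure (EuclideanSpace ℝ (Fin n)))
    (hp₀ : IsProbabilityMeasure μ₀) (hp₁ : IsProbabilityMeasure μ₁)
    (hac₀ : μ₀ ≪ volume) (hac₁ : μ₁ ≪ volume)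
    (q : EuclideanSpace ℝ (Fin n) → EuclideanSpace ℝ (Fin n) → ℝ)
    (hqc : Continuous (fun p : EuclideanSpace ℝ (Fin n) × EuclideanSpace ℝ (Fin n) =>
      q p.1 p.2))
    (hqpos : ∀ x y, 0 < q x y)
    (π ν π' ν' : Measure (EuclideanSpace ℝ (Fin n) × EuclideanSpace ℝ (Fin n)))
    (h : JamisonPair μ₀ μ₁ q π ν) (h' : JamisonPair μ₀ μ₁ q π' ν') :
    π = π' ∧ ν = ν' := by
  obtain ⟨hπp, ⟨ν₀, ν₁, hs₀, hs₁, hνe⟩, hM0, hM1, hπd⟩ := h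
  obtain ⟨hπp', ⟨ν₀', ν₁', hs₀', hs₁', hνe'⟩, hM0', hM1', hπd'⟩ := h'
  haveI := hπp; haveI := hπp'
  haveI := hs₀; haveI := hs₁; haveI := hs₀'; haveI := hs₁'
  subst hνe; subst hνe'
  rw [hπd] at hM0 hM1
  rw [hπd'] at hM0' hM1'
  set Q : EuclideanSpace ℝ (Fin n) × EuclideanSpace ℝ (Fin n) → ℝ≥0∞ :=
    fun p => ENNReal.ofReal (q p.1 p.2) with hQdef
  have hQm : Measurable Q := ENNReal.measurable_ofReal.comp hqc.measurable
  have hQ0 : ∀ p, Q p ≠ 0 := fun p => (ENNReal.ofReal_pos.mpr (hqpos _ _)).ne'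
  have hQtop : ∀ p, Q p ≠ ⊤ := fun _ => ENNReal.ofReal_ne_top
  -- the factor measures are nonzero
  have hprodne : ∀ (m₀ m₁ : Measure (EuclideanSpace ℝ (Fin n))) [SFinite m₀] [SFinite m₁]
      (ρ : Measure (EuclideanSpace ℝ (Fin n) × EuclideanSpace ℝ (Fin n))),
      IsProbabilityMeasure ρ → ρ = (m₀.prod m₁).withDensity Q → m₀ ≠ 0 ∧ m₁ ≠ 0 := by
    intro m₀ m₁ _ _ ρ hρ hd
    constructor
    · intro h0
      have := measure_univ (μ := ρ)
      rw [hd, h0, Measure.zero_prod] at this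
      simp [withDensity_apply _ MeasurableSet.univ] at this
    · intro h0
      have := measure_univ (μ := ρ)
      rw [hd, h0, Measure.prod_zero] at this
      simp [withDensity_apply _ MeasurableSet.univ] at this
  obtain ⟨hν₀ne, hν₁ne⟩ := hprodne ν₀ ν₁ π hπp hπd
  obtain ⟨hν₀ne', hν₁ne'⟩ := hprodne ν₀' ν₁' π' hπp' hπd'
  -- marginal equivalences
  have hfst := JamisonAux.marg_fst ν₀ ν₁ Q hQm hQ0 μ₀ hν₁ne hM0
  have hsnd := JamisonAux.marg_snd ν₀ ν₁ Q hQm hQ0 μ₁ hν₀ne hM1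
  have hfst' := JamisonAux.marg_fst ν₀' ν₁' Q hQm hQ0 μ₀ hν₁ne' hM0'
  have hsnd' := JamisonAux.marg_snd ν₀' ν₁' Q hQm hQ0 μ₁ hν₀ne' hM1'
  have hac0 : ν₀' ≪ ν₀ := hfst'.2.trans hfst.1
  have hac0' : ν₀ ≪ ν₀' := hfst.2.trans hfst'.1
  have hac1 : ν₁' ≪ ν₁ := hsnd'.2.trans hsnd.1
  have hac1' : ν₁ ≪ ν₁' := hsnd.2.trans hsnd'.1
  -- Radon–Nikodym derivatives
  set A := ν₀'.rnDeriv ν₀ with hAdef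
  set B := ν₁'.rnDeriv ν₁ with hBdef
  have hAm : Measurable A := Measure.measurable_rnDeriv _ _
  have hBm : Measurable B := Measure.measurable_rnDeriv _ _
  have e0 : ν₀.withDensity A = ν₀' := Measure.withDensity_rnDeriv_eq _ _ hac0
  have e1 : ν₁.withDensity B = ν₁' := Measure.withDensity_rnDeriv_eq _ _ hac1
  have hApos : ∀ᵐ x ∂ν₀, 0 < A x := hac0'.ae_le (Measure.rnDeriv_pos hac0)
  have hAfin : ∀ᵐ x ∂ν₀, A x < ⊤ := Measure.rnDeriv_lt_top ν₀' ν₀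
  have hBpos : ∀ᵐ y ∂ν₁, 0 < B y := hac1'.ae_le (Measure.rnDeriv_pos hac1)
  have hBfin : ∀ᵐ y ∂ν₁, B y < ⊤ := Measure.rnDeriv_lt_top ν₁' ν₁
  set K : EuclideanSpace ℝ (Fin n) × EuclideanSpace ℝ (Fin n) → ℝ≥0∞ :=
    fun p => A p.1 * B p.2 with hKdef
  have hKm : Measurable K := (hAm.comp measurable_fst).mul (hBm.comp measurable_snd)
  have hprodeq : ν₀'.prod ν₁' = (ν₀.prod ν₁).withDensity K :=
    JamisonAux.prod_withDensity_eq hAm hBm e0 e1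
  have hπ'K : π' = π.withDensity K := by
    rw [hπd', hprodeq, hπd, ← withDensity_mul _ hKm hQm, ← withDensity_mul _ hQm hKm]
    congr 1
    funext p
    exact mul_comm _ _
  -- a.e. goodness under π
  have hgoodprod : ∀ᵐ p ∂(ν₀.prod ν₁),
      (0 < A p.1 ∧ A p.1 < ⊤) ∧ (0 < B p.2 ∧ B p.2 < ⊤) :=
    (JamisonAux.ae_fst_of_ae ν₀ ν₁ (hApos.and hAfin)).and
      (JamisonAux.ae_snd_of_ae ν₀ ν₁ (hBpos.and hBfin))
  have hgood : ∀ᵐ p ∂π, (0 < A p.1 ∧ A p.1 < ⊤) ∧ (0 < B p.2 ∧ B p.2 < ⊤) := by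
    rw [hπd]
    exact (withDensity_absolutelyContinuous _ _).ae_le hgoodprod
  -- marginal identification as maps
  have hmapgen : ∀ (ρ : Measure (EuclideanSpace ℝ (Fin n) × EuclideanSpace ℝ (Fin n))),
      (∀ E, MeasurableSet E → ρ (E ×ˢ (Set.univ : Set (EuclideanSpace ℝ (Fin n)))) = μ₀ E) →
      ρ.map Prod.fst = μ₀ := by
    intro ρ hρ
    refine Measure.ext fun E hE => ?_
    rw [Measure.map_apply measurable_fst hE]
    have : Prod.fst ⁻¹' E = E ×ˢ (Set.univ : Set (EuclideanSpace ℝ (Fin n))) := by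
      ext p; simp
    rw [this]
    exact hρ E hE
  have hmapgen' : ∀ (ρ : Measure (EuclideanSpace ℝ (Fin n) × EuclideanSpace ℝ (Fin n))),
      (∀ E, MeasurableSet E → ρ ((Set.univ : Set (EuclideanSpace ℝ (Fin n))) ×ˢ E) = μ₁ E) →
      ρ.map Prod.snd = μ₁ := by
    intro ρ hρ
    refine Measure.ext fun E hE => ?_
    rw [Measure.map_apply measurable_snd hE]
    have : Prod.snd ⁻¹' E = (Set.univ : Set (EuclideanSpace ℝ (Fin n))) ×ˢ E := by
      ext p; simp
    rw [this]
    exact hρ E hE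
  have hmf : π.map Prod.fst = μ₀ := by
    rw [hπd]; exact hmapgen _ hM0
  have hms : π.map Prod.snd = μ₁ := by
    rw [hπd]; exact hmapgen' _ hM1
  have hmf' : (π.withDensity K).map Prod.fst = μ₀ := by
    rw [← hπ'K, hπd']; exact hmapgen _ hM0'
  have hms' : (π.withDensity K).map Prod.snd = μ₁ := by
    rw [← hπ'K, hπd']; exact hmapgen' _ hM1'
  haveI hKprob : IsProbabilityMeasure (π.withDensity K) := by
    rw [← hπ'K]; exact hπp'
  have hcore : π.withDensity K = π :=
    JamisonAux.core π A B hAm hBm hgood hKprob (by rw [hmf', hmf]) (by rw [hms', hms])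
  have hππ' : π = π' := by rw [hπ'K, hcore]
  refine ⟨hππ', ?_⟩
  have r0 : π.withDensity (fun p => (Q p)⁻¹) = ν₀.prod ν₁ := by
    rw [hπd]
    exact withDensity_inv_same hQm (Filter.Eventually.of_forall hQ0)
      (Filter.Eventually.of_forall hQtop)
  have r1 : π'.withDensity (fun p => (Q p)⁻¹) = ν₀'.prod ν₁' := by
    rw [hπd']
    exact withDensity_inv_same hQm (Filter.Eventually.of_forall hQ0)
      (Filter.Eventually.of_forall hQtop)
  rw [← r0, ← r1, hππ']
end
end
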